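/- arXiv:1006.1158 — 6 statements merged into one kernel-verified Lean document; each statement's English description precedes it below -/
import Mathlib

section
/- Let $k$ be a field with $\mathrm{char}\,k \neq 2$, let $a \in k \setminus \{0\}$, and let $\sigma$ be the $k$-automorphism of the rational function field $k(x,y)$ defined by $\sigma(x) = a/x$, $\sigma(y) = a/y$. Then $k(x,y)^{\langle \sigma \rangle} = k(u,v)$ where $u = (x-y)/(a-xy)$ and $v = (x+y)/(a+xy)$. -/
open IntermediateField Polynomial Module

set_option maxHeartbeats 2000000
set_option synthInstance.maxHeartbeats 200000

/-- **Yamasaki's theorem.** Let `k` be a field with `char k ≠ 2`, `a ∈ k \ {0}`, and `σ`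
the `k`-automorphism of the rational function field `k(x,y)` with `σ(x) = a/x`, `σ(y) = a/y`.
Then `k(x,y)^⟨σ⟩ = k(u,v)` with `u = (x-y)/(a-xy)`, `v = (x+y)/(a+xy)`. -/
theorem stmt_1 {k : Type*} [Field k] (hchar : ringChar k ≠ 2) (a : k) (ha : a ≠ 0)
    (x y : FractionRing (MvPolynomial (Fin 2) k))
    (hx : x = algebraMap (MvPolynomial (Fin 2) k) (FractionRing (MvPolynomial (Fin 2) k))
      (MvPolynomial.X 0))
    (hy : y = algebraMap (MvPolynomial (Fin 2) k) (FractionRing (MvPolynomial (Fin 2) k))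
      (MvPolynomial.X 1))
    (σ : FractionRing (MvPolynomial (Fin 2) k) ≃ₐ[k] FractionRing (MvPolynomial (Fin 2) k))
    (hσx : σ x = algebraMap k (FractionRing (MvPolynomial (Fin 2) k)) a / x)
    (hσy : σ y = algebraMap k (FractionRing (MvPolynomial (Fin 2) k)) a / y) :
    IntermediateField.fixedField (Subgroup.zpowers σ) =
      IntermediateField.adjoin k
        {(x - y) / (algebraMap k (FractionRing (MvPolynomial (Fin 2) k)) a - x * y),
         (x + y) / (algebraMap k (FractionRing (MvPolynomial (Fin 2) k)) a + x * y)} := by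
  set A : FractionRing (MvPolynomial (Fin 2) k) :=
    algebraMap k (FractionRing (MvPolynomial (Fin 2) k)) a with hA
  set u : FractionRing (MvPolynomial (Fin 2) k) := (x - y) / (A - x * y) with hu
  set v : FractionRing (MvPolynomial (Fin 2) k) := (x + y) / (A + x * y) with hv
  have hinj : Function.Injective (algebraMap (MvPolynomial (Fin 2) k)
      (FractionRing (MvPolynomial (Fin 2) k))) := IsFractionRing.injective _ _
  have hkinj : Function.Injective (algebraMap k (FractionRing (MvPolynomial (Fin 2) k))) :=
    (algebraMap k (FractionRing (MvPolynomial (Fin 2) k))).injective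
  -- basic nonvanishing facts
  have hne : ∀ p : MvPolynomial (Fin 2) k, (MvPolynomial.eval (0 : Fin 2 → k)) p ≠ 0 →
      algebraMap (MvPolynomial (Fin 2) k) (FractionRing (MvPolynomial (Fin 2) k)) p ≠ 0 := by
    intro p h h0
    exact h (by rw [hinj (h0.trans (map_zero _).symm)]; simp)
  have hCX : ∀ c : k, algebraMap (MvPolynomial (Fin 2) k)
      (FractionRing (MvPolynomial (Fin 2) k)) (MvPolynomial.C c)
      = algebraMap k (FractionRing (MvPolynomial (Fin 2) k)) c := by
    intro c
    rw [← MvPolynomial.algebraMap_eq, ← IsScalarTower.algebraMap_apply]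
  have hx0 : x ≠ 0 := by
    rw [hx]
    exact (map_ne_zero_iff _ hinj).mpr (MvPolynomial.X_ne_zero 0)
  have hy0 : y ≠ 0 := by
    rw [hy]
    exact (map_ne_zero_iff _ hinj).mpr (MvPolynomial.X_ne_zero 1)
  have hA0 : A ≠ 0 := (map_ne_zero_iff _ hkinj).mpr ha
  have h2k : (2 : k) ≠ 0 := Ring.two_ne_zero hchar
  have h2 : (2 : FractionRing (MvPolynomial (Fin 2) k)) ≠ 0 := by
    have := (map_ne_zero_iff _ hkinj).mpr h2k
    rwa [map_ofNat] at this
  have hd1 : A - x * y ≠ 0 := by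
    have h : A - x * y = algebraMap (MvPolynomial (Fin 2) k)
        (FractionRing (MvPolynomial (Fin 2) k))
        (MvPolynomial.C a - MvPolynomial.X 0 * MvPolynomial.X 1) := by
      rw [map_sub, map_mul, hCX, ← hx, ← hy, hA]
    rw [h]
    exact hne _ (by simp [ha])
  have hd2 : A + x * y ≠ 0 := by
    have h : A + x * y = algebraMap (MvPolynomial (Fin 2) k)
        (FractionRing (MvPolynomial (Fin 2) k))
        (MvPolynomial.C a + MvPolynomial.X 0 * MvPolynomial.X 1) := by
      rw [map_add, map_mul, hCX, ← hx, ← hy, hA]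
    rw [h]
    exact hne _ (by simp [ha])
  have hx2A : x * x - A ≠ 0 := by
    have h : x * x - A = algebraMap (MvPolynomial (Fin 2) k)
        (FractionRing (MvPolynomial (Fin 2) k))
        (MvPolynomial.X 0 * MvPolynomial.X 0 - MvPolynomial.C a) := by
      rw [map_sub, map_mul, hCX, ← hx, hA]
    rw [h]
    exact hne _ (by simp [ha])
  have hy2A : A - y * y ≠ 0 := by
    have h : A - y * y = algebraMap (MvPolynomial (Fin 2) k)
        (FractionRing (MvPolynomial (Fin 2) k))
        (MvPolynomial.C a - MvPolynomial.X 1 * MvPolynomial.X 1) := by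
      rw [map_sub, map_mul, hCX, ← hy, hA]
    rw [h]
    exact hne _ (by simp [ha])
  -- u + v ≠ 0
  have huvkey : (u + v) * ((A - x * y) * (A + x * y)) = 2 * x * (A - y * y) := by
    rw [hu, hv]; field_simp; ring
  have huv0 : u + v ≠ 0 := by
    intro h0
    rw [h0, zero_mul] at huvkey
    exact mul_ne_zero (mul_ne_zero h2 hx0) hy2A huvkey.symm
  -- u*x - 1 ≠ 0
  have hux1 : u * x - 1 ≠ 0 := by
    have key : u * x - 1 = (x * x - A) / (A - x * y) := by
      rw [eq_div_iff hd1, hu]; field_simp; ring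
    rw [key]
    exact div_ne_zero hx2A hd1
  -- σ fixes u and v
  have hσu : σ u = u := by
    rw [hu, map_div₀, map_sub, map_sub, map_mul, hσx, hσy, AlgEquiv.commutes]
    rw [div_eq_div_iff _ hd1]
    · field_simp; ring
    · have h : A - A / x * (A / y) = A * ((x * y - A) / (x * y)) := by
        field_simp
      rw [h]
      refine mul_ne_zero hA0 (div_ne_zero ?_ (mul_ne_zero hx0 hy0))
      intro h0
      exact hd1 (by rw [sub_eq_zero.mp h0]; ring)
  have hσv : σ v = v := by
    rw [hv, map_div₀, map_add, map_add, map_mul, hσx, hσy, AlgEquiv.commutes]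
    rw [div_eq_div_iff _ hd2]
    · field_simp; ring
    · have h : A + A / x * (A / y) = A * ((x * y + A) / (x * y)) := by
        field_simp
      rw [h]
      refine mul_ne_zero hA0 (div_ne_zero ?_ (mul_ne_zero hx0 hy0))
      intro h0
      apply hd2
      have h1 : x * y = -A := by linear_combination h0
      rw [h1]; ring
  -- the fixed field and the candidate subfield
  set F : IntermediateField k (FractionRing (MvPolynomial (Fin 2) k)) :=
    IntermediateField.adjoin k {u, v} with hF
  set E : IntermediateField k (FractionRing (MvPolynomial (Fin 2) k)) :=
    IntermediateField.fixedField (Subgroup.zpowers σ) with hE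
  have huF : u ∈ F := IntermediateField.subset_adjoin k _ (Set.mem_insert _ _)
  have hvF : v ∈ F := IntermediateField.subset_adjoin k _
    (Set.mem_insert_of_mem _ (Set.mem_singleton _))
  have hAF : A ∈ F := IntermediateField.algebraMap_mem F a
  have h2F : (2 : FractionRing (MvPolynomial (Fin 2) k)) ∈ F := ofNat_mem F 2
  -- F is contained in the fixed field
  have hfix : ∀ z : FractionRing (MvPolynomial (Fin 2) k), σ z = z → z ∈ E := by
    intro z hz
    have hst : Subgroup.zpowers σ ≤ MulAction.stabilizer
        (FractionRing (MvPolynomial (Fin 2) k) ≃ₐ[k] FractionRing (MvPolynomial (Fin 2) k)) z :=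
      Subgroup.zpowers_le.mpr (by rwa [MulAction.mem_stabilizer_iff, AlgEquiv.smul_def])
    intro g
    exact hst g.2
  have hFE : F ≤ E := by
    rw [hF]
    exact IntermediateField.adjoin_le_iff.mpr (by
      rintro w (rfl | rfl)
      · exact hfix _ hσu
      · exact hfix _ hσv)
  -- x is not in the fixed field
  have hxE : x ∉ E := by
    intro hmem
    have hs : σ x = x := hmem ⟨σ, Subgroup.mem_zpowers σ⟩
    rw [hσx, div_eq_iff hx0] at hs
    exact hx2A (by rw [← hs]; ring)
  -- the quadratic equation satisfied by x over F
  have hquad : (u + v) * (x * x) - 2 * (1 + A * u * v) * x + A * (u + v) = 0 := by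
    rw [hu, hv]; field_simp; ring
  set c1 : F := ⟨2 * (1 + A * u * v) / (u + v),
    div_mem (mul_mem h2F (add_mem (one_mem F) (mul_mem (mul_mem hAF huF) hvF)))
      (add_mem huF hvF)⟩ with hc1
  set c0 : F := ⟨A, hAF⟩ with hc0
  set p : Polynomial F := Polynomial.X ^ 2 - Polynomial.C c1 * Polynomial.X + Polynomial.C c0
    with hp
  have hpmonic : p.Monic := by
    have h := Polynomial.monic_X_pow_sub (p := Polynomial.C c1 * Polynomial.X - Polynomial.C c0)
      (n := 2) (lt_of_le_of_lt (by compute_degree) (by norm_num))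
    have h2 : Polynomial.X ^ 2 - (Polynomial.C c1 * Polynomial.X - Polynomial.C c0) = p := by
      rw [hp]; ring
    rwa [h2] at h
  have hpdeg : p.degree ≤ 2 := by rw [hp]; compute_degree
  have haeval : Polynomial.aeval x p = 0 := by
    have hxx : Polynomial.aeval x p
        = x ^ 2 - (2 * (1 + A * u * v) / (u + v)) * x + A := by
      rw [hp, map_add, map_sub, map_mul, map_pow, Polynomial.aeval_X, Polynomial.aeval_C,
        Polynomial.aeval_C]
      rfl
    rw [hxx]
    field_simp
    linear_combination hquad
  have hint : IsIntegral F x := ⟨p, hpmonic, haeval⟩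
  -- degree bound
  have hfd : FiniteDimensional F F⟮x⟯ := IntermediateField.adjoin.finiteDimensional hint
  have hfr2 : finrank F F⟮x⟯ ≤ 2 := by
    rw [IntermediateField.adjoin.finrank hint]
    have hdle := minpoly.degree_le_of_ne_zero F x hpmonic.ne_zero haeval
    exact Polynomial.natDegree_le_iff_degree_le.mpr (le_trans hdle hpdeg)
  -- k(x,y) is everything
  have hadjxy : IntermediateField.adjoin k {x, y} = ⊤ := by
    rw [eq_top_iff]
    rintro z -
    obtain ⟨p, q, hq, rfl⟩ := IsFractionRing.div_surjective (A := MvPolynomial (Fin 2) k) z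
    have hmem : ∀ r : MvPolynomial (Fin 2) k,
        algebraMap (MvPolynomial (Fin 2) k) (FractionRing (MvPolynomial (Fin 2) k)) r
          ∈ IntermediateField.adjoin k {x, y} := by
      intro r
      induction r using MvPolynomial.induction_on with
      | C c => rw [hCX]; exact IntermediateField.algebraMap_mem _ c
      | add p q hp hq => rw [map_add]; exact add_mem hp hq
      | mul_X p i hp =>
        rw [map_mul]
        refine mul_mem hp (IntermediateField.subset_adjoin k _ ?_)
        fin_cases i
        · exact Set.mem_insert_iff.mpr (Or.inl hx.symm)
        · exact Set.mem_insert_iff.mpr (Or.inr (Set.mem_singleton_iff.mpr hy.symm))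
    exact div_mem (hmem p) (hmem q)
  -- y lies in F(x)
  have hxFx : x ∈ F⟮x⟯ := IntermediateField.mem_adjoin_simple_self F x
  have hFsub : ∀ w : FractionRing (MvPolynomial (Fin 2) k), w ∈ F → w ∈ F⟮x⟯ := by
    intro w hw
    exact IntermediateField.algebraMap_mem F⟮x⟯ (⟨w, hw⟩ : F)
  have hyFx : y ∈ F⟮x⟯ := by
    have hyrel : y * (u * x - 1) = u * A - x := by
      rw [hu, div_mul_eq_mul_div, div_mul_eq_mul_div, div_sub_one hd1, div_sub' hd1, mul_div_assoc', div_eq_div_iff hd1 hd1]; ring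
    have hyeq : y = (u * A - x) / (u * x - 1) := by
      rw [eq_div_iff hux1]; linear_combination hyrel
    rw [hyeq]
    exact div_mem (sub_mem (mul_mem (hFsub u huF) (hFsub A hAF)) hxFx)
      (sub_mem (mul_mem (hFsub u huF) hxFx) (one_mem _))
  have hFxtop : F⟮x⟯ = ⊤ := by
    rw [eq_top_iff]
    intro z _
    have h1 : IntermediateField.adjoin k {x, y} ≤ (F⟮x⟯).restrictScalars k :=
      IntermediateField.adjoin_le_iff.mpr (by
        rintro w (rfl | rfl)
        · exact hxFx
        · exact hyFx)
    exact h1 (hadjxy.symm ▸ IntermediateField.mem_top)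
  haveI hKfd : FiniteDimensional F (FractionRing (MvPolynomial (Fin 2) k)) := by
    have e := (IntermediateField.equivOfEq hFxtop).trans IntermediateField.topEquiv
    exact Module.Finite.equiv e.toLinearEquiv
  have hfrK : finrank F (FractionRing (MvPolynomial (Fin 2) k)) ≤ 2 := by
    have e := (IntermediateField.equivOfEq hFxtop).trans IntermediateField.topEquiv
    rw [← e.toLinearEquiv.finrank_eq]
    exact hfr2
  -- conclude
  set E' : IntermediateField F (FractionRing (MvPolynomial (Fin 2) k)) :=
    IntermediateField.extendScalars hFE with hE'
  haveI hE'fd : FiniteDimensional E' (FractionRing (MvPolynomial (Fin 2) k)) :=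
    FiniteDimensional.right F E' _
  have hE'pos : 0 < finrank E' (FractionRing (MvPolynomial (Fin 2) k)) := finrank_pos
  have hE'ne1 : finrank E' (FractionRing (MvPolynomial (Fin 2) k)) ≠ 1 := by
    intro h1
    have hbot : (⊥ : Subalgebra E' (FractionRing (MvPolynomial (Fin 2) k))) = ⊤ :=
      Subalgebra.bot_eq_top_of_finrank_eq_one h1
    have hxmem : x ∈ (⊤ : Subalgebra E' (FractionRing (MvPolynomial (Fin 2) k))) := trivial
    rw [← hbot, Algebra.mem_bot] at hxmem
    obtain ⟨w, hw⟩ := hxmem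
    apply hxE
    have hxE' : x ∈ E' := by rw [← hw]; exact SetLike.coe_mem w
    exact (IntermediateField.mem_extendScalars hFE).mp hxE'
  have hmul : finrank F E' * finrank E' (FractionRing (MvPolynomial (Fin 2) k))
      = finrank F (FractionRing (MvPolynomial (Fin 2) k)) :=
    finrank_mul_finrank F E' _
  have hFE'pos : 0 < finrank F E' := finrank_pos
  have hE'1 : finrank F E' = 1 := by
    have hb2 : 2 ≤ finrank E' (FractionRing (MvPolynomial (Fin 2) k)) := by omega
    nlinarith
  have hbotE : E' = ⊥ := IntermediateField.finrank_eq_one_iff.mp hE'1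
  refine le_antisymm (fun z hz => ?_) hFE
  have hz' : z ∈ E' := (IntermediateField.mem_extendScalars hFE).mpr hz
  rw [hbotE, IntermediateField.mem_bot] at hz'
  obtain ⟨w, rfl⟩ := hz'
  exact SetLike.coe_mem w
end

section
/- Let $k$ be a field and let $\sigma$ be the $k$-automorphism of the rational function field $k(x,y,z)$ defined by $\sigma: x \mapsto y \mapsto z \mapsto x$. Then $k(x,y,z)^{\langle\sigma\rangle} = k(s_1, u, v)$, where $s_1 = x+y+z$, $u = (x^2y + y^2z + z^2x - 3xyz)/(x^2+y^2+z^2-xy-yz-zx)$, and $v = (xy^2 + yz^2 + zx^2 - 3xyz)/(x^2+y^2+z^2-xy-yz-zx)$. -/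
private lemma gen_subfield {k : Type*} [Field k] {K : Type*} [Field K]
    [Algebra (MvPolynomial (Fin 3) k) K] [IsFractionRing (MvPolynomial (Fin 3) k) K]
    [Algebra k K] [IsScalarTower k (MvPolynomial (Fin 3) k) K]
    (S : Subfield K)
    (hk : ∀ c : k, algebraMap k K c ∈ S)
    (h0 : algebraMap (MvPolynomial (Fin 3) k) K (MvPolynomial.X 0) ∈ S)
    (h1 : algebraMap (MvPolynomial (Fin 3) k) K (MvPolynomial.X 1) ∈ S)
    (h2 : algebraMap (MvPolynomial (Fin 3) k) K (MvPolynomial.X 2) ∈ S) :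
    ∀ a : K, a ∈ S := by
  have hRS : ∀ p : MvPolynomial (Fin 3) k, algebraMap (MvPolynomial (Fin 3) k) K p ∈ S := by
    intro p
    induction p using MvPolynomial.induction_on with
    | C a =>
        have : algebraMap (MvPolynomial (Fin 3) k) K (MvPolynomial.C a)
            = algebraMap k K a := by
          rw [IsScalarTower.algebraMap_apply k (MvPolynomial (Fin 3) k) K a,
            MvPolynomial.algebraMap_eq]
        rw [this]; exact hk a
    | add p q hp hq => rw [RingHom.map_add]; exact add_mem hp hq
    | mul_X p i hp =>
        rw [RingHom.map_mul]
        exact mul_mem hp (by fin_cases i <;> assumption)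
  intro a
  obtain ⟨p, q, -, rfl⟩ := IsFractionRing.div_surjective (A := MvPolynomial (Fin 3) k) a
  exact div_mem (hRS p) (hRS q)

set_option maxHeartbeats 2000000 in
set_option synthInstance.maxHeartbeats 400000 in
private theorem masuda_aux {k : Type*} [Field k] {K : Type*} [Field K]
    [Algebra (MvPolynomial (Fin 3) k) K] [IsFractionRing (MvPolynomial (Fin 3) k) K]
    [Algebra k K] [IsScalarTower k (MvPolynomial (Fin 3) k) K]
    (x y z : K)
    (hx : x = algebraMap (MvPolynomial (Fin 3) k) K (MvPolynomial.X 0))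
    (hy : y = algebraMap (MvPolynomial (Fin 3) k) K (MvPolynomial.X 1))
    (hz : z = algebraMap (MvPolynomial (Fin 3) k) K (MvPolynomial.X 2))
    (σ : K ≃ₐ[k] K)
    (hσx : σ x = y) (hσy : σ y = z) (hσz : σ z = x) :
    IntermediateField.fixedField (Subgroup.zpowers σ) =
      IntermediateField.adjoin k
        {x + y + z,
         (x ^ 2 * y + y ^ 2 * z + z ^ 2 * x - 3 * (x * y * z)) /
           (x ^ 2 + y ^ 2 + z ^ 2 - x * y - y * z - z * x),
         (x * y ^ 2 + y * z ^ 2 + z * x ^ 2 - 3 * (x * y * z)) /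
           (x ^ 2 + y ^ 2 + z ^ 2 - x * y - y * z - z * x)} := by
  have hinj : Function.Injective (algebraMap (MvPolynomial (Fin 3) k) K) :=
    IsFractionRing.injective _ K
  -- basic nonvanishing
  have hxy : x ≠ y := by
    rw [hx, hy]
    exact fun h => by simpa using MvPolynomial.X_injective (R := k) (hinj h)
  have hxz : x ≠ z := by
    rw [hx, hz]
    exact fun h => by simpa using MvPolynomial.X_injective (R := k) (hinj h)
  have hx0 : x ≠ 0 := by
    rw [hx]
    intro h
    exact MvPolynomial.X_ne_zero (R := k) 0 (hinj (by simpa using h))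
  have hN : x ^ 2 + y ^ 2 + z ^ 2 - x * y - y * z - z * x ≠ 0 := by
    rw [hx, hy, hz]
    intro h
    have h2 : (MvPolynomial.X 0 ^ 2 + MvPolynomial.X 1 ^ 2 + MvPolynomial.X 2 ^ 2
        - MvPolynomial.X 0 * MvPolynomial.X 1 - MvPolynomial.X 1 * MvPolynomial.X 2
        - MvPolynomial.X 2 * MvPolynomial.X 0 : MvPolynomial (Fin 3) k) = 0 := by
      apply hinj
      rw [RingHom.map_sub, RingHom.map_sub, RingHom.map_sub, RingHom.map_add, RingHom.map_add,
        RingHom.map_mul, RingHom.map_mul, RingHom.map_mul, RingHom.map_pow, RingHom.map_pow,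
        RingHom.map_pow, RingHom.map_zero]
      exact h
    have h3 := congrArg (MvPolynomial.eval (fun i : Fin 3 => if i = 0 then (1 : k) else 0)) h2
    simp at h3
  -- sigma has order 3
  have hσ3 : σ ^ 3 = 1 := by
    have key : ∀ a : K, (σ ^ 3) a = a := by
      refine gen_subfield (k := k) (K := K)
        { carrier := {a | (σ ^ 3) a = a}
          mul_mem' := fun {a b} ha hb => by
            simp only [Set.mem_setOf_eq, map_mul] at *; rw [ha, hb]
          one_mem' := by simp only [Set.mem_setOf_eq, map_one]
          add_mem' := fun {a b} ha hb => by
            simp only [Set.mem_setOf_eq, map_add] at *; rw [ha, hb]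
          zero_mem' := by simp only [Set.mem_setOf_eq, map_zero]
          neg_mem' := fun {a} ha => by
            simp only [Set.mem_setOf_eq, map_neg] at *; rw [ha]
          inv_mem' := fun a ha => by
            simp only [Set.mem_setOf_eq, map_inv₀] at *; rw [ha] }
        (fun c => AlgEquiv.commutes _ c) ?_ ?_ ?_
      · show (σ ^ 3) (algebraMap (MvPolynomial (Fin 3) k) K (MvPolynomial.X 0))
          = algebraMap (MvPolynomial (Fin 3) k) K (MvPolynomial.X 0)
        rw [← hx, pow_succ, pow_succ, pow_one, AlgEquiv.mul_apply, AlgEquiv.mul_apply,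
          hσx, hσy, hσz]
      · show (σ ^ 3) (algebraMap (MvPolynomial (Fin 3) k) K (MvPolynomial.X 1))
          = algebraMap (MvPolynomial (Fin 3) k) K (MvPolynomial.X 1)
        rw [← hy, pow_succ, pow_succ, pow_one, AlgEquiv.mul_apply, AlgEquiv.mul_apply,
          hσy, hσz, hσx]
      · show (σ ^ 3) (algebraMap (MvPolynomial (Fin 3) k) K (MvPolynomial.X 2))
          = algebraMap (MvPolynomial (Fin 3) k) K (MvPolynomial.X 2)
        rw [← hz, pow_succ, pow_succ, pow_one, AlgEquiv.mul_apply, AlgEquiv.mul_apply,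
          hσz, hσx, hσy]
    exact AlgEquiv.ext key
  have hσne : σ ≠ 1 := by
    intro h
    exact hxy (by rw [← hσx, h, AlgEquiv.one_apply])
  have hord : orderOf σ = 3 := by
    haveI : Fact (Nat.Prime 3) := ⟨by norm_num⟩
    exact orderOf_eq_prime hσ3 hσne
  have hfin : IsOfFinOrder σ := orderOf_pos_iff.mp (by rw [hord]; norm_num)
  haveI : Fintype (Subgroup.zpowers σ) := Fintype.ofEquiv _ (finEquivZPowers hfin)
  have hcard : Fintype.card (Subgroup.zpowers σ) = 3 := by
    rw [← Nat.card_eq_fintype_card, Nat.card_zpowers, hord]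
  haveI : FaithfulSMul (Subgroup.zpowers σ) K :=
    ⟨fun {g₁ g₂} h => Subtype.ext (AlgEquiv.ext h)⟩
  have hfr3 : Module.finrank (IntermediateField.fixedField (Subgroup.zpowers σ)) K = 3 := by
    rw [show Module.finrank (IntermediateField.fixedField (Subgroup.zpowers σ)) K
      = Fintype.card (Subgroup.zpowers σ) from FixedPoints.finrank_eq_card (Subgroup.zpowers σ) K]
    exact hcard
  -- the candidate field L
  set N : K := x ^ 2 + y ^ 2 + z ^ 2 - x * y - y * z - z * x with hNdef
  set s1 : K := x + y + z with hs1def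
  set u : K := (x ^ 2 * y + y ^ 2 * z + z ^ 2 * x - 3 * (x * y * z)) / N with hudef
  set v : K := (x * y ^ 2 + y * z ^ 2 + z * x ^ 2 - 3 * (x * y * z)) / N with hvdef
  set L : IntermediateField k K := IntermediateField.adjoin k {s1, u, v} with hLdef
  have hu : u * N = x ^ 2 * y + y ^ 2 * z + z ^ 2 * x - 3 * (x * y * z) := by
    rw [hudef]; exact div_mul_cancel₀ _ hN
  have hv : v * N = x * y ^ 2 + y * z ^ 2 + z * x ^ 2 - 3 * (x * y * z) := by
    rw [hvdef]; exact div_mul_cancel₀ _ hN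
  have hs1L : s1 ∈ L := IntermediateField.subset_adjoin k _ (by simp)
  have huL : u ∈ L := IntermediateField.subset_adjoin k _ (by simp)
  have hvL : v ∈ L := IntermediateField.subset_adjoin k _ (by simp)
  -- L is fixed by σ
  have hσs1 : σ s1 = s1 := by
    rw [hs1def, map_add, map_add, hσx, hσy, hσz]; ring
  have hσu : σ u = u := by
    rw [hudef, hNdef, map_div₀]
    simp only [map_add, map_sub, map_mul, map_pow, map_ofNat, hσx, hσy, hσz]
    congr 1 <;> ring
  have hσv : σ v = v := by
    rw [hvdef, hNdef, map_div₀]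
    simp only [map_add, map_sub, map_mul, map_pow, map_ofNat, hσx, hσy, hσz]
    congr 1 <;> ring
  have hfixmem : ∀ t : K, σ t = t → t ∈ IntermediateField.fixedField (Subgroup.zpowers σ) := by
    intro t hσt
    have hst : Subgroup.zpowers σ ≤ MulAction.stabilizer (K ≃ₐ[k] K) t :=
      Subgroup.zpowers_le.mpr hσt
    rintro ⟨g, hg⟩
    exact hst hg
  have hle : L ≤ IntermediateField.fixedField (Subgroup.zpowers σ) := by
    rw [hLdef]
    refine IntermediateField.adjoin_le_iff.mpr ?_
    rintro t ht
    simp only [Set.mem_insert_iff, Set.mem_singleton_iff] at ht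
    rcases ht with rfl | rfl | rfl
    · exact hfixmem _ hσs1
    · exact hfixmem _ hσu
    · exact hfixmem _ hσv
  -- symmetric functions lie in L
  have h3K : (3 : K) ∈ L := by
    have h := natCast_mem L 3
    rw [Nat.cast_ofNat] at h
    exact h
  have hs2 : s1 * (u + v) - 3 * (u ^ 2 - u * v + v ^ 2) = x * y + y * z + z * x := by
    have hN2 : N ^ 2 ≠ 0 := pow_ne_zero 2 hN
    refine mul_right_cancel₀ hN2 ?_
    have e1 : (s1 * (u + v) - 3 * (u ^ 2 - u * v + v ^ 2)) * N ^ 2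
        = s1 * ((u * N) + (v * N)) * N
          - 3 * ((u * N) ^ 2 - (u * N) * (v * N) + (v * N) ^ 2) := by ring
    rw [e1, hu, hv, hs1def, hNdef]; ring
  have hs3 : s1 * u * v - u ^ 3 - v ^ 3 = x * y * z := by
    have hN3 : N ^ 3 ≠ 0 := pow_ne_zero 3 hN
    refine mul_right_cancel₀ hN3 ?_
    have e1 : (s1 * u * v - u ^ 3 - v ^ 3) * N ^ 3
        = s1 * (u * N) * (v * N) * N - (u * N) ^ 3 - (v * N) ^ 3 := by ring
    rw [e1, hu, hv, hs1def, hNdef]; ring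
  have hS2L : x * y + y * z + z * x ∈ L := by
    rw [← hs2]
    exact sub_mem (mul_mem hs1L (add_mem huL hvL))
      (mul_mem h3K (add_mem (sub_mem (pow_mem huL 2) (mul_mem huL hvL)) (pow_mem hvL 2)))
  have hS3L : x * y * z ∈ L := by
    rw [← hs3]
    exact sub_mem (sub_mem (mul_mem (mul_mem hs1L huL) hvL) (pow_mem huL 3)) (pow_mem hvL 3)
  -- x is integral of degree ≤ 3 over L
  have heval : (Polynomial.aeval x)
      (Polynomial.X ^ 3 - (Polynomial.C (⟨s1, hs1L⟩ : L) * Polynomial.X ^ 2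
        + Polynomial.C (⟨-(x * y + y * z + z * x), neg_mem hS2L⟩ : L) * Polynomial.X
        + Polynomial.C (⟨x * y * z, hS3L⟩ : L))) = 0 := by
    simp only [map_sub, map_add, map_mul, map_pow, Polynomial.aeval_X, Polynomial.aeval_C,
      IntermediateField.algebraMap_apply]
    show x ^ 3 - (s1 * x ^ 2 + -(x * y + y * z + z * x) * x + x * y * z) = 0
    rw [hs1def]; ring
  have hmonic : (Polynomial.X ^ 3 - (Polynomial.C (⟨s1, hs1L⟩ : L) * Polynomial.X ^ 2
        + Polynomial.C (⟨-(x * y + y * z + z * x), neg_mem hS2L⟩ : L) * Polynomial.X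
        + Polynomial.C (⟨x * y * z, hS3L⟩ : L))).Monic :=
    Polynomial.monic_X_pow_sub (Polynomial.degree_quadratic_le.trans_lt (by norm_num))
  have hint : IsIntegral (↥L) x := ⟨_, hmonic, heval⟩
  have hdeg3 : (Polynomial.X ^ 3 - (Polynomial.C (⟨s1, hs1L⟩ : L) * Polynomial.X ^ 2
        + Polynomial.C (⟨-(x * y + y * z + z * x), neg_mem hS2L⟩ : L) * Polynomial.X
        + Polynomial.C (⟨x * y * z, hS3L⟩ : L))).natDegree = 3 := by
    rw [Polynomial.natDegree_sub_eq_left_of_natDegree_lt, Polynomial.natDegree_X_pow]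
    rw [Polynomial.natDegree_X_pow]
    exact lt_of_le_of_lt Polynomial.natDegree_quadratic_le (by norm_num)
  -- K = L(x)
  have hE : IntermediateField.adjoin (↥L) {x} = (⊤ : IntermediateField (↥L) K) := by
    set E : IntermediateField (↥L) K := IntermediateField.adjoin (↥L) {x} with hEdef
    have hLE : ∀ a : K, a ∈ L → a ∈ E := by
      intro a ha
      exact E.algebraMap_mem (⟨a, ha⟩ : L)
    have hxE : x ∈ E := IntermediateField.subset_adjoin _ _ (by simp)
    have hs1E : s1 ∈ E := hLE _ hs1L
    have huE : u ∈ E := hLE _ huL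
    have hS3E : x * y * z ∈ E := hLE _ hS3L
    have h2E : (2 : K) ∈ E := by
      have h := natCast_mem E.toSubfield 2
      rw [Nat.cast_ofNat] at h
      exact h
    have h3E : (3 : K) ∈ E := hLE _ h3K
    have h4E : (4 : K) ∈ E := by
      have h := natCast_mem E.toSubfield 4
      rw [Nat.cast_ofNat] at h
      exact h
    -- y belongs to E via the elimination identity
    have hBfact : x ^ 3 * s1 - 2 * x ^ 4 - x * (x * y * z) = -(x ^ 2 * (x - y) * (x - z)) := by
      rw [hs1def]; ring
    have hB0 : x ^ 3 * s1 - 2 * x ^ 4 - x * (x * y * z) ≠ 0 := by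
      rw [hBfact, neg_ne_zero]
      exact mul_ne_zero (mul_ne_zero (pow_ne_zero 2 hx0) (sub_ne_zero.mpr hxy))
        (sub_ne_zero.mpr hxz)
    have hBy : (x ^ 3 * s1 - 2 * x ^ 4 - x * (x * y * z)) * y
        = 3 * x * u * (x * y * z) - 4 * x ^ 2 * (x * y * z)
          - x ^ 2 * s1 ^ 2 * u + 3 * x ^ 3 * s1 * u
          + x ^ 3 * s1 ^ 2 - 3 * x ^ 4 * u - 2 * x ^ 4 * s1 + x ^ 5 := by
      refine mul_right_cancel₀ hN ?_
      have e1 : (3 * x * u * (x * y * z) - 4 * x ^ 2 * (x * y * z)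
            - x ^ 2 * s1 ^ 2 * u + 3 * x ^ 3 * s1 * u
            + x ^ 3 * s1 ^ 2 - 3 * x ^ 4 * u - 2 * x ^ 4 * s1 + x ^ 5) * N
          = 3 * x * (u * N) * (x * y * z) - 4 * x ^ 2 * (x * y * z) * N
            - x ^ 2 * s1 ^ 2 * (u * N) + 3 * x ^ 3 * s1 * (u * N)
            + x ^ 3 * s1 ^ 2 * N - 3 * x ^ 4 * (u * N) - 2 * x ^ 4 * s1 * N + x ^ 5 * N := by
        ring
      rw [e1, hu, hs1def, hNdef]; ring
    have hyE : y ∈ E := by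
      have hyeq : y = (3 * x * u * (x * y * z) - 4 * x ^ 2 * (x * y * z)
          - x ^ 2 * s1 ^ 2 * u + 3 * x ^ 3 * s1 * u
          + x ^ 3 * s1 ^ 2 - 3 * x ^ 4 * u - 2 * x ^ 4 * s1 + x ^ 5)
          / (x ^ 3 * s1 - 2 * x ^ 4 - x * (x * y * z)) := by
        rw [eq_div_iff hB0]
        linear_combination hBy
      rw [hyeq]
      refine div_mem ?_ ?_
      · exact add_mem (sub_mem (sub_mem (add_mem (add_mem (sub_mem (sub_mem
          (mul_mem (mul_mem (mul_mem h3E hxE) huE) hS3E)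
          (mul_mem (mul_mem h4E (pow_mem hxE 2)) hS3E))
          (mul_mem (mul_mem (pow_mem hxE 2) (pow_mem hs1E 2)) huE))
          (mul_mem (mul_mem (mul_mem h3E (pow_mem hxE 3)) hs1E) huE))
          (mul_mem (pow_mem hxE 3) (pow_mem hs1E 2)))
          (mul_mem (mul_mem h3E (pow_mem hxE 4)) huE))
          (mul_mem (mul_mem h2E (pow_mem hxE 4)) hs1E))
          (pow_mem hxE 5)
      · exact sub_mem (sub_mem (mul_mem (pow_mem hxE 3) hs1E)
          (mul_mem h2E (pow_mem hxE 4))) (mul_mem hxE hS3E)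
    have hzE : z ∈ E := by
      have hzeq : z = s1 - x - y := by rw [hs1def]; ring
      rw [hzeq]
      exact sub_mem (sub_mem hs1E hxE) hyE
    rw [eq_top_iff]
    intro a _
    refine gen_subfield (k := k) (K := K) E.toSubfield ?_ ?_ ?_ ?_ a
    · intro c
      exact hLE _ (L.algebraMap_mem c)
    · rw [← hx]; exact hxE
    · rw [← hy]; exact hyE
    · rw [← hz]; exact hzE
  -- degree bound
  haveI hfd1 : FiniteDimensional (↥L) ↥(IntermediateField.adjoin (↥L) {x}) :=
    IntermediateField.adjoin.finiteDimensional hint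
  haveI hfd : FiniteDimensional (↥L) K := by
    rw [hE] at hfd1
    exact Module.Finite.equiv (IntermediateField.topEquiv (F := ↥L) (E := K)).toLinearEquiv
  have hfrL : Module.finrank (↥L) K ≤ 3 := by
    have e1 : Module.finrank (↥L) K
        = Module.finrank (↥L) ↥(⊤ : IntermediateField (↥L) K) :=
      ((IntermediateField.topEquiv (F := ↥L) (E := K)).toLinearEquiv.finrank_eq).symm
    rw [e1, ← hE, IntermediateField.adjoin.finrank hint]
    calc (minpoly (↥L) x).natDegree
        ≤ (Polynomial.X ^ 3 - (Polynomial.C (⟨s1, hs1L⟩ : L) * Polynomial.X ^ 2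
          + Polynomial.C (⟨-(x * y + y * z + z * x), neg_mem hS2L⟩ : L) * Polynomial.X
          + Polynomial.C (⟨x * y * z, hS3L⟩ : L))).natDegree :=
          Polynomial.natDegree_le_of_dvd (minpoly.dvd _ _ heval) hmonic.ne_zero
      _ = 3 := hdeg3
  -- conclusion
  refine (IntermediateField.eq_of_le_of_finrank_le' hle ?_).symm
  rw [hfr3]
  exact hfrL

/-- **Masuda's theorem (s₁ form).** Let `σ` be the `k`-automorphism of `k(x,y,z)` cyclically
permuting `x, y, z`. Then `k(x,y,z)^⟨σ⟩ = k(s₁, u, v)` with `s₁ = x+y+z` and `u, v` as below. -/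
theorem stmt_2 {k : Type*} [Field k]
    (x y z : FractionRing (MvPolynomial (Fin 3) k))
    (hx : x = algebraMap (MvPolynomial (Fin 3) k) (FractionRing (MvPolynomial (Fin 3) k))
      (MvPolynomial.X 0))
    (hy : y = algebraMap (MvPolynomial (Fin 3) k) (FractionRing (MvPolynomial (Fin 3) k))
      (MvPolynomial.X 1))
    (hz : z = algebraMap (MvPolynomial (Fin 3) k) (FractionRing (MvPolynomial (Fin 3) k))
      (MvPolynomial.X 2))
    (σ : FractionRing (MvPolynomial (Fin 3) k) ≃ₐ[k] FractionRing (MvPolynomial (Fin 3) k))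
    (hσx : σ x = y) (hσy : σ y = z) (hσz : σ z = x) :
    IntermediateField.fixedField (Subgroup.zpowers σ) =
      IntermediateField.adjoin k
        {x + y + z,
         (x ^ 2 * y + y ^ 2 * z + z ^ 2 * x - 3 * (x * y * z)) /
           (x ^ 2 + y ^ 2 + z ^ 2 - x * y - y * z - z * x),
         (x * y ^ 2 + y * z ^ 2 + z * x ^ 2 - 3 * (x * y * z)) /
           (x ^ 2 + y ^ 2 + z ^ 2 - x * y - y * z - z * x)} :=
  masuda_aux x y z hx hy hz σ hσx hσy hσz
end

section
/- Let $k$ be a field with $\mathrm{char}\,k \neq 2, 3$ such that $\sqrt{-2} \in k$. The matrices $A = \frac{\sqrt{-2}}{2}\begin{pmatrix} 1&1&0&0 \\ -1&1&0&0 \\ 0&0&-1&1 \\ 0&0&-1&-1 \end{pmatrix}$, $B = \begin{pmatrix} 0&0&0&-1 \\ 0&0&1&0 \\ 0&-1&0&0 \\ 1&0&0&0 \end{pmatrix}$, $C = \frac{1}{2}\begin{pmatrix} 1&1&1&1 \\ -1&1&-1&1 \\ -1&1&1&-1 \\ -1&-1&1&1 \end{pmatrix}$ satisfy the defining relations of the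 binary octahedral group $\widehat{S_4}$: $A^8 = B^4 = C^6 = I$, $BAB^{-1} = A^{-1}$, $CBC^{-1} = A^2$, $(AC)^2 = -A^2B$. -/
set_option maxHeartbeats 2000000 in
/-- If `√-2 ∈ k` and `char k ≠ 2, 3`, the matrices `A, B, C` of Formula (3.3) satisfy the
defining relations of the binary octahedral group `Ŝ₄`:
`A⁸ = B⁴ = C⁶ = I`, `BAB⁻¹ = A⁻¹`, `CBC⁻¹ = A²`, `(AC)² = -A²B`. -/
theorem stmt_8 {k : Type*} [Field k] (h2 : ringChar k ≠ 2) (h3 : ringChar k ≠ 3)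
    (s : k) (hs : s ^ 2 = -2)
    (A B C : Matrix (Fin 4) (Fin 4) k)
    (hA : A = (s / 2) • !![1, 1, 0, 0; -1, 1, 0, 0; 0, 0, -1, 1; 0, 0, -1, -1])
    (hB : B = !![0, 0, 0, -1; 0, 0, 1, 0; 0, -1, 0, 0; 1, 0, 0, 0])
    (hC : C = (2 : k)⁻¹ • !![1, 1, 1, 1; -1, 1, -1, 1; -1, 1, 1, -1; -1, -1, 1, 1]) :
    A ^ 8 = 1 ∧ B ^ 4 = 1 ∧ C ^ 6 = 1 ∧
      B * A * B⁻¹ = A⁻¹ ∧ C * B * C⁻¹ = A ^ 2 ∧ (A * C) ^ 2 = -(A ^ 2 * B) := by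
  have h2' : (2 : k) ≠ 0 := Ring.two_ne_zero h2
  have hA2 : A ^ 2 = !![0,-1,0,0;1,0,0,0;0,0,0,1;0,0,-1,0] := by
    rw [pow_two, hA]
    ext i j
    fin_cases i <;> fin_cases j <;>
      simp [Matrix.mul_apply, Fin.sum_univ_four, Matrix.vecHead, Matrix.vecTail] <;>
      field_simp <;>
      first
      | ring1
      | linear_combination (1:k) * hs
      | linear_combination (-1:k) * hs
      | linear_combination (2:k) * hs
      | linear_combination (-2:k) * hs
      | linear_combination (4:k) * hs
      | linear_combination (-4:k) * hs
      | linear_combination (8:k) * hs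
      | linear_combination (-8:k) * hs
      | (norm_num; done)
  have hA4 : A ^ 4 = -1 := by
    have h : A ^ 4 = A ^ 2 * A ^ 2 := by rw [← pow_add]
    rw [h, hA2]
    ext i j
    fin_cases i <;> fin_cases j <;>
      simp [Matrix.mul_apply, Fin.sum_univ_four, Matrix.vecHead, Matrix.vecTail,
        Matrix.one_apply] <;> norm_num
  have hA8 : A ^ 8 = 1 := by
    have h : A ^ 8 = (A ^ 4) ^ 2 := by rw [← pow_mul]
    rw [h, hA4]; simp
  have hB2 : B ^ 2 = -1 := by
    rw [pow_two, hB]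
    ext i j
    fin_cases i <;> fin_cases j <;>
      simp [Matrix.mul_apply, Fin.sum_univ_four, Matrix.vecHead, Matrix.vecTail,
        Matrix.one_apply] <;> norm_num
  have hB4 : B ^ 4 = 1 := by
    have h : B ^ 4 = (B ^ 2) ^ 2 := by rw [← pow_mul]
    rw [h, hB2]; simp
  have hC2 : C ^ 2 = (2 : k)⁻¹ • !![-1,1,1,1;-1,-1,-1,1;-1,1,-1,-1;-1,-1,1,-1] := by
    rw [pow_two, hC]
    ext i j
    fin_cases i <;> fin_cases j <;>
      simp [Matrix.mul_apply, Fin.sum_univ_four, Matrix.vecHead, Matrix.vecTail] <;>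
      field_simp <;> first | ring1 | (norm_num; done)
  have hC3 : C ^ 3 = -1 := by
    have h : C ^ 3 = C ^ 2 * C := by rw [← pow_succ]
    rw [h, hC2, hC]
    ext i j
    fin_cases i <;> fin_cases j <;>
      simp [Matrix.mul_apply, Fin.sum_univ_four, Matrix.vecHead, Matrix.vecTail,
        Matrix.one_apply] <;>
      field_simp <;> first | ring1 | (norm_num; done)
  have hC6 : C ^ 6 = 1 := by
    have h : C ^ 6 = (C ^ 3) ^ 2 := by rw [← pow_mul]
    rw [h, hC3]; simp
  have hBinv : B⁻¹ = -B := by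
    apply Matrix.inv_eq_right_inv
    rw [mul_neg, ← pow_two, hB2]; simp
  have hAinv : A⁻¹ = -(A ^ 2 * A) := by
    apply Matrix.inv_eq_right_inv
    have h : A * (A ^ 2 * A) = A ^ 4 := by
      rw [← pow_succ, ← pow_succ']
    rw [mul_neg, h, hA4]; simp
  have hCinv : C⁻¹ = -(C * C) := by
    apply Matrix.inv_eq_right_inv
    have h : C * (C * C) = C ^ 3 := by
      rw [← pow_two, ← pow_succ']
    rw [mul_neg, h, hC3]; simp
  -- helper products
  have hBA : B * A = (s / 2) • !![0,0,1,1;0,0,-1,1;1,-1,0,0;1,1,0,0] := by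
    rw [hA, hB, Matrix.mul_smul]
    congr 1
    ext i j
    fin_cases i <;> fin_cases j <;>
      simp [Matrix.mul_apply, Fin.sum_univ_four, Matrix.vecHead, Matrix.vecTail]
  have hBAB : B * A * B = (s / 2) • !![1,-1,0,0;1,1,0,0;0,0,-1,-1;0,0,1,-1] := by
    rw [hBA, hB, Matrix.smul_mul]
    congr 1
    ext i j
    fin_cases i <;> fin_cases j <;>
      simp [Matrix.mul_apply, Fin.sum_univ_four, Matrix.vecHead, Matrix.vecTail]
  have hA3 : A ^ 2 * A = (s / 2) • !![1,-1,0,0;1,1,0,0;0,0,-1,-1;0,0,1,-1] := by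
    rw [hA2, hA, Matrix.mul_smul]
    congr 1
    ext i j
    fin_cases i <;> fin_cases j <;>
      simp [Matrix.mul_apply, Fin.sum_univ_four, Matrix.vecHead, Matrix.vecTail]
  have hCB : C * B = (2 : k)⁻¹ • !![1,-1,1,-1;1,1,1,1;-1,-1,1,1;1,-1,-1,1] := by
    rw [hC, hB, Matrix.smul_mul]
    congr 1
    ext i j
    fin_cases i <;> fin_cases j <;>
      simp [Matrix.mul_apply, Fin.sum_univ_four, Matrix.vecHead, Matrix.vecTail]
  have hAC : A * C = (s / 2) • !![0,1,0,1;-1,0,-1,0;0,-1,0,1;1,0,-1,0] := by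
    rw [hA, hC, Matrix.smul_mul, Matrix.mul_smul, smul_smul]
    ext i j
    fin_cases i <;> fin_cases j <;>
      simp [Matrix.mul_apply, Fin.sum_univ_four, Matrix.vecHead, Matrix.vecTail] <;>
      field_simp <;> first | ring1 | (norm_num; done)
  have hA2B : A ^ 2 * B = !![0,0,-1,0;0,0,0,-1;1,0,0,0;0,1,0,0] := by
    rw [hA2, hB]
    ext i j
    fin_cases i <;> fin_cases j <;>
      simp [Matrix.mul_apply, Fin.sum_univ_four, Matrix.vecHead, Matrix.vecTail]
  have hCC : C * C = (2 : k)⁻¹ • !![-1,1,1,1;-1,-1,-1,1;-1,1,-1,-1;-1,-1,1,-1] := by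
    rw [← pow_two]; exact hC2
  refine ⟨hA8, hB4, hC6, ?_, ?_, ?_⟩
  · rw [hBinv, hAinv, mul_neg, neg_inj, hBAB, hA3]
  · rw [hCinv, mul_neg, neg_eq_iff_eq_neg, hA2, hCB, hCC, Matrix.smul_mul,
      Matrix.mul_smul, smul_smul]
    ext i j
    fin_cases i <;> fin_cases j <;>
      simp [Matrix.mul_apply, Fin.sum_univ_four, Matrix.vecHead, Matrix.vecTail] <;>
      field_simp <;> first | ring1 | (norm_num; done)
  · rw [pow_two, hAC, hA2B, Matrix.smul_mul, Matrix.mul_smul, smul_smul]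
    ext i j
    fin_cases i <;> fin_cases j <;>
      simp [Matrix.mul_apply, Fin.sum_univ_four, Matrix.vecHead, Matrix.vecTail] <;>
      field_simp <;>
      first
      | ring1
      | linear_combination (1:k) * hs
      | linear_combination (-1:k) * hs
      | linear_combination (2:k) * hs
      | linear_combination (-2:k) * hs
      | linear_combination (4:k) * hs
      | linear_combination (-4:k) * hs
      | linear_combination (8:k) * hs
      | linear_combination (-8:k) * hs
      | (norm_num; done)
end

section
/- Let $k$ be a field with $\mathrm{char}\,k \neq 2$, and let $\sigma$ be the $k$-automorphism of $k(u_1, u_2, u_3)$ defined by $\sigma(u_1) = 1/u_1$, $\sigma(u_2) = 1/u_2$, $\sigma(u_3) = u_3/u_1$. Then $k(u_1,u_2,u_3)^{\langle\sigma\rangle} = k(v_1, v_2, v_3)$ where $v_1 = (u_1 - u_2)/(1 - u_1 u_2)$, $v_2 = (u_1 + u_2)/(1 + u_1 u_2)$, and $v_3 = u_3(1 + 1/u_1)$. -/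
open IntermediateField Polynomial Module

set_option maxHeartbeats 2000000
set_option synthInstance.maxHeartbeats 400000

private lemma aux_mem_top {k : Type*} [Field k]
    (F : IntermediateField k (FractionRing (MvPolynomial (Fin 3) k)))
    (h : ∀ i : Fin 3, algebraMap (MvPolynomial (Fin 3) k) (FractionRing (MvPolynomial (Fin 3) k))
      (MvPolynomial.X i) ∈ F)
    (x : FractionRing (MvPolynomial (Fin 3) k)) : x ∈ F := by
  have hmem : ∀ p : MvPolynomial (Fin 3) k,
      algebraMap (MvPolynomial (Fin 3) k) (FractionRing (MvPolynomial (Fin 3) k)) p ∈ F := by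
    intro p
    induction p using MvPolynomial.induction_on with
    | C a =>
        rw [← MvPolynomial.algebraMap_eq, ← IsScalarTower.algebraMap_apply]
        exact F.algebraMap_mem a
    | add p q hp hq => rw [map_add]; exact F.add_mem hp hq
    | mul_X p i hp => rw [map_mul]; exact F.mul_mem hp (h i)
  obtain ⟨p, q, -, rfl⟩ := IsFractionRing.div_surjective (A := MvPolynomial (Fin 3) k) x
  exact F.div_mem (hmem p) (hmem q)

private lemma key_lemma {K : Type*} [Field K] (u₁ u₂ : K) (hm : 1 - u₁*u₂ ≠ 0) (hp : 1 + u₁*u₂ ≠ 0) :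
    ((u₁-u₂)/(1-u₁*u₂) + (u₁+u₂)/(1+u₁*u₂))*(u₁^2+1)
      = 2*(1+((u₁-u₂)/(1-u₁*u₂))*((u₁+u₂)/(1+u₁*u₂)))*u₁ := by
  field_simp
  ring

private lemma den_lemma {K : Type*} [Field K] (u₁ u₂ : K) (hm : 1 - u₁*u₂ ≠ 0) :
    1 - (u₁-u₂)/(1-u₁*u₂)*u₁ = (1-u₁^2)/(1-u₁*u₂) := by
  field_simp
  ring

private lemma u2_lemma {K : Type*} [Field K] (u₁ u₂ : K) (hm : 1 - u₁*u₂ ≠ 0)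
    (hden : 1 - (u₁-u₂)/(1-u₁*u₂)*u₁ ≠ 0) :
    u₂ = (u₁ - (u₁-u₂)/(1-u₁*u₂))/(1 - (u₁-u₂)/(1-u₁*u₂)*u₁) := by
  rw [eq_div_iff hden]
  rw [div_mul_eq_mul_div, one_sub_div hm, sub_div' hm, mul_div_assoc']
  field_simp
  ring

private lemma u3_lemma {K : Type*} [Field K] (u₁ u₃ : K) (hu1 : u₁ ≠ 0) (hp : u₁ + 1 ≠ 0) :
    u₃ = u₃ * (1 + 1/u₁) * u₁ / (u₁ + 1) := by
  rw [eq_div_iff hp]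
  field_simp

/-- Let `char k ≠ 2` and `σ` the `k`-automorphism of `k(u₁,u₂,u₃)` with `σ(u₁)=1/u₁`,
`σ(u₂)=1/u₂`, `σ(u₃)=u₃/u₁`. Then `k(u₁,u₂,u₃)^⟨σ⟩ = k(v₁,v₂,v₃)` with
`v₁=(u₁-u₂)/(1-u₁u₂)`, `v₂=(u₁+u₂)/(1+u₁u₂)`, `v₃=u₃(1+1/u₁)`. -/
theorem stmt_10 {k : Type*} [Field k] (hchar : ringChar k ≠ 2)
    (u₁ u₂ u₃ : FractionRing (MvPolynomial (Fin 3) k))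
    (h1 : u₁ = algebraMap (MvPolynomial (Fin 3) k) (FractionRing (MvPolynomial (Fin 3) k))
      (MvPolynomial.X 0))
    (h2 : u₂ = algebraMap (MvPolynomial (Fin 3) k) (FractionRing (MvPolynomial (Fin 3) k))
      (MvPolynomial.X 1))
    (h3 : u₃ = algebraMap (MvPolynomial (Fin 3) k) (FractionRing (MvPolynomial (Fin 3) k))
      (MvPolynomial.X 2))
    (σ : FractionRing (MvPolynomial (Fin 3) k) ≃ₐ[k] FractionRing (MvPolynomial (Fin 3) k))
    (hσ1 : σ u₁ = 1 / u₁) (hσ2 : σ u₂ = 1 / u₂) (hσ3 : σ u₃ = u₃ / u₁) :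
    IntermediateField.fixedField (Subgroup.zpowers σ) =
      IntermediateField.adjoin k
        {(u₁ - u₂) / (1 - u₁ * u₂), (u₁ + u₂) / (1 + u₁ * u₂), u₃ * (1 + 1 / u₁)} := by
  have inj := IsFractionRing.injective (MvPolynomial (Fin 3) k)
      (FractionRing (MvPolynomial (Fin 3) k))
  have hne : ∀ (c : k) (p q : MvPolynomial (Fin 3) k),
      MvPolynomial.eval (fun _ => c) p ≠ MvPolynomial.eval (fun _ => c) q →
      algebraMap (MvPolynomial (Fin 3) k) (FractionRing (MvPolynomial (Fin 3) k)) p ≠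
        algebraMap (MvPolynomial (Fin 3) k) (FractionRing (MvPolynomial (Fin 3) k)) q :=
    fun c p q hpq h => hpq (congrArg (MvPolynomial.eval fun _ => c) (inj h))
  -- basic nonvanishing facts
  have hu1 : u₁ ≠ 0 := by
    rw [h1]
    have := hne 1 (MvPolynomial.X 0) 0 (by simp)
    simpa using this
  have hu2 : u₂ ≠ 0 := by
    rw [h2]
    have := hne 1 (MvPolynomial.X 1) 0 (by simp)
    simpa using this
  have hu1p : u₁ + 1 ≠ 0 := by
    rw [h1]
    have := hne 0 (MvPolynomial.X 0 + 1) 0 (by simp)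
    simpa using this
  have hsq1 : u₁ ^ 2 ≠ 1 := by
    rw [h1]
    have := hne 0 (MvPolynomial.X 0 ^ 2) 1 (by simp)
    simpa using this
  have hsq2 : u₂ ^ 2 ≠ 1 := by
    rw [h2]
    have := hne 0 (MvPolynomial.X 1 ^ 2) 1 (by simp)
    simpa using this
  have hm1 : u₁ * u₂ ≠ 1 := by
    rw [h1, h2]
    have := hne 0 (MvPolynomial.X 0 * MvPolynomial.X 1) 1 (by simp)
    simpa using this
  have hp1 : u₁ * u₂ ≠ -1 := by
    rw [h1, h2]
    have := hne 0 (MvPolynomial.X 0 * MvPolynomial.X 1) (-1) (by simp)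
    simpa using this
  have hm : 1 - u₁ * u₂ ≠ 0 := sub_ne_zero.mpr (Ne.symm hm1)
  have hp : 1 + u₁ * u₂ ≠ 0 := fun h => hp1 (by linear_combination h)
  have h2K : (2 : FractionRing (MvPolynomial (Fin 3) k)) ≠ 0 := by
    have h2k : (2 : k) ≠ 0 := Ring.two_ne_zero hchar
    have := hne 0 2 0 (by simp [map_ofNat, h2k])
    simpa [map_ofNat] using this
  set w₁ := (u₁ - u₂) / (1 - u₁ * u₂) with hw₁
  set w₂ := (u₁ + u₂) / (1 + u₁ * u₂) with hw₂
  set w₃ := u₃ * (1 + 1 / u₁) with hw₃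
  set L := IntermediateField.adjoin k
      {w₁, w₂, w₃} with hL
  have hw1L : w₁ ∈ L := IntermediateField.subset_adjoin k _ (by simp)
  have hw2L : w₂ ∈ L := IntermediateField.subset_adjoin k _ (by simp)
  have hw3L : w₃ ∈ L := IntermediateField.subset_adjoin k _ (by simp)
  -- σ fixes the generators
  have hfix1 : σ w₁ = w₁ := by
    rw [hw₁]
    simp only [map_div₀, map_sub, map_one, map_mul, hσ1, hσ2]
    have hBne : 1 - 1 / u₁ * (1 / u₂) ≠ 0 := by
      have hB : 1 - 1 / u₁ * (1 / u₂) = (u₁ * u₂ - 1) / (u₁ * u₂) := by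
        field_simp
      rw [hB]
      exact div_ne_zero (sub_ne_zero.mpr hm1) (mul_ne_zero hu1 hu2)
    rw [div_eq_div_iff hBne hm]
    field_simp
    ring
  have hfix2 : σ w₂ = w₂ := by
    rw [hw₂]
    simp only [map_div₀, map_add, map_one, map_mul, hσ1, hσ2]
    have hBne : 1 + 1 / u₁ * (1 / u₂) ≠ 0 := by
      have hB : 1 + 1 / u₁ * (1 / u₂) = (u₁ * u₂ + 1) / (u₁ * u₂) := by
        field_simp
      rw [hB]
      refine div_ne_zero (fun h => hp1 ?_) (mul_ne_zero hu1 hu2)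
      linear_combination h
    rw [div_eq_div_iff hBne hp]
    field_simp
    ring
  have hfix3 : σ w₃ = w₃ := by
    rw [hw₃]
    simp only [map_mul, map_add, map_one, map_div₀, hσ3, hσ1]
    rw [one_div_one_div]
    field_simp
    ring
  have hfixall : ∀ x ∈ ({w₁, w₂, w₃} :
      Set (FractionRing (MvPolynomial (Fin 3) k))), σ x = x := by
    intro x hx
    rcases hx with rfl | rfl | rfl
    exacts [hfix1, hfix2, hfix3]
  have hLF : L ≤ IntermediateField.fixedField (Subgroup.zpowers σ) := by
    rw [hL, IntermediateField.adjoin_le_iff]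
    intro x hx
    have hst : Subgroup.zpowers σ ≤
        MulAction.stabilizer (FractionRing (MvPolynomial (Fin 3) k) ≃ₐ[k]
          FractionRing (MvPolynomial (Fin 3) k)) x := by
      rw [Subgroup.zpowers_le]
      exact hfixall x hx
    exact fun g => hst g.2
  have hu1nf : u₁ ∉ IntermediateField.fixedField (Subgroup.zpowers σ) := by
    intro h
    have h' : σ u₁ = u₁ := h ⟨σ, Subgroup.mem_zpowers σ⟩
    rw [hσ1] at h'
    rw [div_eq_iff hu1] at h'
    exact hsq1 (by rw [sq]; exact h'.symm)
  -- the sum of the first two generators is nonzero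
  have hs_sum : w₁ + w₂ = 2 * u₁ * (1 - u₂ ^ 2) / ((1 - u₁ * u₂) * (1 + u₁ * u₂)) := by
    rw [hw₁, hw₂, div_add_div _ _ hm hp, div_eq_div_iff (mul_ne_zero hm hp) (mul_ne_zero hm hp)]
    ring
  have hsum_ne : w₁ + w₂ ≠ 0 := by
    rw [hs_sum]
    exact div_ne_zero (mul_ne_zero (mul_ne_zero h2K hu1) (sub_ne_zero.mpr (Ne.symm hsq2)))
      (mul_ne_zero hm hp)
  -- the key quadratic relation for u₁ over L
  have key : (w₁ + w₂) * (u₁ ^ 2 + 1) = 2 * (1 + w₁ * w₂) * u₁ := by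
    have hk := key_lemma u₁ u₂ hm hp
    rwa [← hw₁, ← hw₂] at hk
  have h2L : (2 : FractionRing (MvPolynomial (Fin 3) k)) ∈ L := by
    rw [show (2 : FractionRing (MvPolynomial (Fin 3) k)) = 1 + 1 by norm_num]
    exact L.add_mem L.one_mem L.one_mem
  have hmem_a : -(2 * (1 + w₁ * w₂) / (w₁ + w₂)) ∈ L :=
    L.neg_mem (L.div_mem (L.mul_mem h2L (L.add_mem L.one_mem (L.mul_mem hw1L hw2L)))
      (L.add_mem hw1L hw2L))
  set a : L := ⟨-(2 * (1 + w₁ * w₂) / (w₁ + w₂)), hmem_a⟩ with ha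
  set P : Polynomial L := Polynomial.X ^ 2 + (Polynomial.C a * Polynomial.X + Polynomial.C 1)
    with hP
  have hPmonic : P.Monic := by
    rw [hP]
    exact Polynomial.monic_X_pow_add (lt_of_le_of_lt Polynomial.degree_linear_le (by norm_num))
  have hPdeg : P.natDegree = 2 := by
    apply Polynomial.natDegree_eq_of_degree_eq_some
    rw [hP, Polynomial.degree_add_eq_left_of_degree_lt, Polynomial.degree_X_pow]
    rw [Polynomial.degree_X_pow]
    exact lt_of_le_of_lt Polynomial.degree_linear_le (by norm_num)
  have haeval : Polynomial.aeval u₁ P = 0 := by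
    have coe_a : (algebraMap L (FractionRing (MvPolynomial (Fin 3) k))) a
        = -(2 * (1 + w₁ * w₂) / (w₁ + w₂)) := rfl
    rw [hP]
    simp only [map_add, map_mul, map_pow, map_one, Polynomial.aeval_X, Polynomial.aeval_C, coe_a]
    have h5 : 2 * (1 + w₁ * w₂) / (w₁ + w₂) * u₁ = u₁ ^ 2 + 1 := by
      rw [div_mul_eq_mul_div, div_eq_iff hsum_ne]
      linear_combination -key
    linear_combination -h5
  have hint : IsIntegral L u₁ := ⟨P, hPmonic, haeval⟩
  -- K = L(u₁)
  have hu1mem : u₁ ∈ L⟮u₁⟯ := IntermediateField.mem_adjoin_simple_self L u₁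
  have hLsub : ∀ y ∈ L, y ∈ L⟮u₁⟯ := fun y hy => (L⟮u₁⟯).algebraMap_mem ⟨y, hy⟩
  have hden : 1 - w₁ * u₁ ≠ 0 := by
    have hd := den_lemma u₁ u₂ hm
    rw [← hw₁] at hd
    rw [hd]
    exact div_ne_zero (sub_ne_zero.mpr (Ne.symm hsq1)) hm
  have hu2eq : u₂ = (u₁ - w₁) / (1 - w₁ * u₁) := by
    have h := u2_lemma u₁ u₂ hm (by rw [← hw₁] at *; exact hden)
    rwa [← hw₁] at h
  have hu3eq : u₃ = w₃ * u₁ / (u₁ + 1) := by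
    have h := u3_lemma u₁ u₃ hu1 hu1p
    rwa [← hw₃] at h
  have m1 : u₁ ∈ L⟮u₁⟯ := hu1mem
  have m2 : u₂ ∈ L⟮u₁⟯ := by
    rw [hu2eq]
    exact div_mem (sub_mem hu1mem (hLsub w₁ hw1L))
      (sub_mem (one_mem _) (mul_mem (hLsub w₁ hw1L) hu1mem))
  have m3 : u₃ ∈ L⟮u₁⟯ := by
    rw [hu3eq]
    exact div_mem (mul_mem (hLsub w₃ hw3L) hu1mem) (add_mem hu1mem (one_mem _))
  have hX : ∀ i : Fin 3, algebraMap (MvPolynomial (Fin 3) k)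
      (FractionRing (MvPolynomial (Fin 3) k)) (MvPolynomial.X i) ∈
      (L⟮u₁⟯).restrictScalars k := by
    intro i
    fin_cases i
    · show algebraMap (MvPolynomial (Fin 3) k)
        (FractionRing (MvPolynomial (Fin 3) k)) (MvPolynomial.X 0) ∈ (L⟮u₁⟯).restrictScalars k
      rw [← h1]; exact m1
    · show algebraMap (MvPolynomial (Fin 3) k)
        (FractionRing (MvPolynomial (Fin 3) k)) (MvPolynomial.X 1) ∈ (L⟮u₁⟯).restrictScalars k
      rw [← h2]; exact m2
    · show algebraMap (MvPolynomial (Fin 3) k)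
        (FractionRing (MvPolynomial (Fin 3) k)) (MvPolynomial.X 2) ∈ (L⟮u₁⟯).restrictScalars k
      rw [← h3]; exact m3
  have htop : L⟮u₁⟯ = (⊤ : IntermediateField L (FractionRing (MvPolynomial (Fin 3) k))) := by
    rw [eq_top_iff]
    intro x _
    exact aux_mem_top ((L⟮u₁⟯).restrictScalars k) hX x
  have hfd1 : FiniteDimensional L L⟮u₁⟯ := IntermediateField.adjoin.finiteDimensional hint
  have e3 : finrank L (FractionRing (MvPolynomial (Fin 3) k)) = finrank L L⟮u₁⟯ := by
    rw [htop, IntermediateField.finrank_top']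
  haveI hfdL : FiniteDimensional L (FractionRing (MvPolynomial (Fin 3) k)) := by
    rw [htop] at hfd1
    exact (IntermediateField.topEquiv (F := L)
      (E := FractionRing (MvPolynomial (Fin 3) k))).toLinearEquiv.finiteDimensional
  have hrk : finrank L (FractionRing (MvPolynomial (Fin 3) k)) ≤ 2 := by
    have e1 : finrank L L⟮u₁⟯ = (minpoly L u₁).natDegree :=
      IntermediateField.adjoin.finrank hint
    have e2 : (minpoly L u₁).natDegree ≤ 2 := by
      have hd := minpoly.degree_le_of_ne_zero L u₁ hPmonic.ne_zero haeval
      have h' := Polynomial.natDegree_le_natDegree hd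
      rwa [hPdeg] at h'
    rw [e3, e1]
    exact e2
  -- finish by a dimension count
  set E' := IntermediateField.extendScalars hLF with hE'
  haveI hfdE' : FiniteDimensional E' (FractionRing (MvPolynomial (Fin 3) k)) :=
    Module.Finite.right L E' (FractionRing (MvPolynomial (Fin 3) k))
  have hE'ne : finrank E' (FractionRing (MvPolynomial (Fin 3) k)) ≠ 1 := by
    intro hone
    have hbt := Subalgebra.bot_eq_top_of_finrank_eq_one hone
    have hmem : u₁ ∈ (⊥ : Subalgebra E' (FractionRing (MvPolynomial (Fin 3) k))) := by
      rw [hbt]; trivial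
    rw [Algebra.mem_bot] at hmem
    obtain ⟨y, hy⟩ := hmem
    apply hu1nf
    have : u₁ ∈ E' := by rw [← hy]; exact y.2
    exact this
  have hmul := Module.finrank_mul_finrank (F := L) (K := E')
    (A := FractionRing (MvPolynomial (Fin 3) k))
  have hpos1 : 0 < finrank L E' := finrank_pos
  have hpos2 : 0 < finrank E' (FractionRing (MvPolynomial (Fin 3) k)) := finrank_pos
  have hge2 : 2 ≤ finrank E' (FractionRing (MvPolynomial (Fin 3) k)) := by omega
  have h1' : finrank L E' = 1 := by nlinarith [hrk, hmul, hpos1, hge2]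
  have hbot : E' = ⊥ := IntermediateField.finrank_eq_one_iff.mp h1'
  apply le_antisymm _ hLF
  intro x hx
  have hxE : x ∈ E' := hx
  rw [hbot, IntermediateField.mem_bot] at hxE
  obtain ⟨y, hy⟩ := hxE
  rw [← hy]
  exact y.2
end

section
/- In the rational function field $k(v_1, v_2)$ over a field $k$, let $c$ be the $k$-automorphism of order 3 with $c(v_1) = 1/v_2$ and $c(v_2) = v_1/v_2$. Then the elements $X_1 = (v_1^3v_2^3 + v_1^3 + v_2^3 - 3v_1^2v_2^2)/(v_1^4v_2^2 + v_2^4 + v_1^2 - v_1^2v_2^3 - v_1v_2^2 - v_1^3v_2)$ and $X_2 = (v_1v_2^4 + v_1v_2 + v_1^4v_2 - 3v_1^2v_2^2)/(v_1^4v_2^2 + v_2^4 + v_1^2 - v_1^2v_2^3 - v_1v_2^2 - v_1^3v_2)$ are fixed by $c$, and $k(v_1, v_2)^{\langle c \rangle} = k(X_1, X_2)$. -/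
set_option maxHeartbeats 4000000
set_option synthInstance.maxHeartbeats 1000000

open IntermediateField

theorem Masuda.elem_ne_zero {k : Type*} [Field k] (p : MvPolynomial (Fin 2) k)
    (f : Fin 2 → Polynomial k) (n : ℕ) (hn : ((MvPolynomial.aeval f) p).natDegree = n)
    (h0 : n ≠ 0) :
    algebraMap (MvPolynomial (Fin 2) k) (FractionRing (MvPolynomial (Fin 2) k)) p ≠ 0 := by
  intro hz
  have hp : p = 0 := IsFractionRing.injective _ _ (by rw [hz, map_zero])
  rw [hp, map_zero, Polynomial.natDegree_zero] at hn
  exact h0 hn.symm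

theorem Masuda.mem_fixedField_of_fixed {k K : Type*} [Field k] [Field K] [Algebra k K]
    (c : K ≃ₐ[k] K) {x : K} (h : c x = x) :
    x ∈ IntermediateField.fixedField (Subgroup.zpowers c) := by
  intro g
  have hstab : Subgroup.zpowers c ≤ MulAction.stabilizer (K ≃ₐ[k] K) x :=
    Subgroup.zpowers_le.mpr h
  exact hstab g.2

theorem Masuda.finrank_fixedField {k K : Type*} [Field k] [Field K] [Algebra k K]
    (H : Subgroup (K ≃ₐ[k] K)) [Fintype H] :
    Module.finrank (IntermediateField.fixedField H) K = Fintype.card H :=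
  FixedPoints.finrank_eq_card H K

/-- In `k(v₁,v₂)`, let `c` be the `k`-automorphism of order 3 with `c(v₁)=1/v₂`,
`c(v₂)=v₁/v₂`. Then `X₁, X₂` below are fixed by `c` and `k(v₁,v₂)^⟨c⟩ = k(X₁,X₂)`. -/
theorem stmt_11 {k : Type*} [Field k]
    (v₁ v₂ : FractionRing (MvPolynomial (Fin 2) k))
    (h1 : v₁ = algebraMap (MvPolynomial (Fin 2) k) (FractionRing (MvPolynomial (Fin 2) k))
      (MvPolynomial.X 0))
    (h2 : v₂ = algebraMap (MvPolynomial (Fin 2) k) (FractionRing (MvPolynomial (Fin 2) k))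
      (MvPolynomial.X 1))
    (c : FractionRing (MvPolynomial (Fin 2) k) ≃ₐ[k] FractionRing (MvPolynomial (Fin 2) k))
    (hc1 : c v₁ = 1 / v₂) (hc2 : c v₂ = v₁ / v₂) (hord : orderOf c = 3) :
    c ((v₁ ^ 3 * v₂ ^ 3 + v₁ ^ 3 + v₂ ^ 3 - 3 * (v₁ ^ 2 * v₂ ^ 2)) /
        (v₁ ^ 4 * v₂ ^ 2 + v₂ ^ 4 + v₁ ^ 2 - v₁ ^ 2 * v₂ ^ 3 - v₁ * v₂ ^ 2 - v₁ ^ 3 * v₂)) =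
      (v₁ ^ 3 * v₂ ^ 3 + v₁ ^ 3 + v₂ ^ 3 - 3 * (v₁ ^ 2 * v₂ ^ 2)) /
        (v₁ ^ 4 * v₂ ^ 2 + v₂ ^ 4 + v₁ ^ 2 - v₁ ^ 2 * v₂ ^ 3 - v₁ * v₂ ^ 2 - v₁ ^ 3 * v₂) ∧
    c ((v₁ * v₂ ^ 4 + v₁ * v₂ + v₁ ^ 4 * v₂ - 3 * (v₁ ^ 2 * v₂ ^ 2)) /
        (v₁ ^ 4 * v₂ ^ 2 + v₂ ^ 4 + v₁ ^ 2 - v₁ ^ 2 * v₂ ^ 3 - v₁ * v₂ ^ 2 - v₁ ^ 3 * v₂)) =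
      (v₁ * v₂ ^ 4 + v₁ * v₂ + v₁ ^ 4 * v₂ - 3 * (v₁ ^ 2 * v₂ ^ 2)) /
        (v₁ ^ 4 * v₂ ^ 2 + v₂ ^ 4 + v₁ ^ 2 - v₁ ^ 2 * v₂ ^ 3 - v₁ * v₂ ^ 2 - v₁ ^ 3 * v₂) ∧
    IntermediateField.fixedField (Subgroup.zpowers c) =
      IntermediateField.adjoin k
        {(v₁ ^ 3 * v₂ ^ 3 + v₁ ^ 3 + v₂ ^ 3 - 3 * (v₁ ^ 2 * v₂ ^ 2)) /
           (v₁ ^ 4 * v₂ ^ 2 + v₂ ^ 4 + v₁ ^ 2 - v₁ ^ 2 * v₂ ^ 3 - v₁ * v₂ ^ 2 - v₁ ^ 3 * v₂),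
         (v₁ * v₂ ^ 4 + v₁ * v₂ + v₁ ^ 4 * v₂ - 3 * (v₁ ^ 2 * v₂ ^ 2)) /
           (v₁ ^ 4 * v₂ ^ 2 + v₂ ^ 4 + v₁ ^ 2 - v₁ ^ 2 * v₂ ^ 3 - v₁ * v₂ ^ 2 - v₁ ^ 3 * v₂)} := by
  classical
  set N1 := v₁ ^ 3 * v₂ ^ 3 + v₁ ^ 3 + v₂ ^ 3 - 3 * (v₁ ^ 2 * v₂ ^ 2) with hN1def
  set N2 := v₁ * v₂ ^ 4 + v₁ * v₂ + v₁ ^ 4 * v₂ - 3 * (v₁ ^ 2 * v₂ ^ 2) with hN2def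
  set D := v₁ ^ 4 * v₂ ^ 2 + v₂ ^ 4 + v₁ ^ 2 - v₁ ^ 2 * v₂ ^ 3 - v₁ * v₂ ^ 2 - v₁ ^ 3 * v₂
    with hDdef
  have inj : Function.Injective
      (algebraMap (MvPolynomial (Fin 2) k) (FractionRing (MvPolynomial (Fin 2) k))) :=
    IsFractionRing.injective _ _
  have hv1 : v₁ ≠ 0 := by
    rw [h1]; intro h
    exact MvPolynomial.X_ne_zero 0 (inj (by rw [h, map_zero]))
  have hv2 : v₂ ≠ 0 := by
    rw [h2]; intro h
    exact MvPolynomial.X_ne_zero 1 (inj (by rw [h, map_zero]))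
  -- nonzeroness of N1 N2 D and the auxiliary G
  have eD : algebraMap (MvPolynomial (Fin 2) k) (FractionRing (MvPolynomial (Fin 2) k))
      ((MvPolynomial.X 0) ^ 4 * (MvPolynomial.X 1) ^ 2 + (MvPolynomial.X 1) ^ 4
        + (MvPolynomial.X 0) ^ 2 - (MvPolynomial.X 0) ^ 2 * (MvPolynomial.X 1) ^ 3
        - (MvPolynomial.X 0) * (MvPolynomial.X 1) ^ 2
        - (MvPolynomial.X 0) ^ 3 * (MvPolynomial.X 1)) = D := by
    rw [hDdef, h1, h2]; simp only [map_add, map_sub, map_mul, map_pow]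
  have eN1 : algebraMap (MvPolynomial (Fin 2) k) (FractionRing (MvPolynomial (Fin 2) k))
      ((MvPolynomial.X 0) ^ 3 * (MvPolynomial.X 1) ^ 3 + (MvPolynomial.X 0) ^ 3
        + (MvPolynomial.X 1) ^ 3
        - 3 * ((MvPolynomial.X 0) ^ 2 * (MvPolynomial.X 1) ^ 2)) = N1 := by
    rw [hN1def, h1, h2]; simp only [map_add, map_sub, map_mul, map_pow, map_ofNat]
  have eN2 : algebraMap (MvPolynomial (Fin 2) k) (FractionRing (MvPolynomial (Fin 2) k))
      ((MvPolynomial.X 0) * (MvPolynomial.X 1) ^ 4 + (MvPolynomial.X 0) * (MvPolynomial.X 1)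
        + (MvPolynomial.X 0) ^ 4 * (MvPolynomial.X 1)
        - 3 * ((MvPolynomial.X 0) ^ 2 * (MvPolynomial.X 1) ^ 2)) = N2 := by
    rw [hN2def, h1, h2]; simp only [map_add, map_sub, map_mul, map_pow, map_ofNat]
  have hD : D ≠ 0 := by
    rw [← eD]
    refine Masuda.elem_ne_zero _ (fun _ => Polynomial.X) 6 ?_ (by norm_num)
    simp only [map_add, map_sub, map_mul, map_pow, MvPolynomial.aeval_X]
    ring_nf
    compute_degree!
  have hN1 : N1 ≠ 0 := by
    rw [← eN1]
    refine Masuda.elem_ne_zero _ (fun _ => Polynomial.X) 6 ?_ (by norm_num)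
    simp only [map_add, map_sub, map_mul, map_pow, map_ofNat, MvPolynomial.aeval_X]
    ring_nf
    compute_degree!
  have hN2 : N2 ≠ 0 := by
    rw [← eN2]
    refine Masuda.elem_ne_zero _ ![Polynomial.X ^ 2, Polynomial.X] 9 ?_ (by norm_num)
    simp only [map_add, map_sub, map_mul, map_pow, map_ofNat, MvPolynomial.aeval_X,
      Matrix.cons_val_zero, Matrix.cons_val_one, Matrix.head_cons]
    ring_nf
    compute_degree!
  have hG : N1 ^ 2 - N1 * N2 + N2 ^ 2 - v₁ * N2 * D ≠ 0 := by
    have eG : algebraMap (MvPolynomial (Fin 2) k) (FractionRing (MvPolynomial (Fin 2) k))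
        (((MvPolynomial.X 0) ^ 3 * (MvPolynomial.X 1) ^ 3 + (MvPolynomial.X 0) ^ 3
          + (MvPolynomial.X 1) ^ 3
          - 3 * ((MvPolynomial.X 0) ^ 2 * (MvPolynomial.X 1) ^ 2)) ^ 2
        - ((MvPolynomial.X 0) ^ 3 * (MvPolynomial.X 1) ^ 3 + (MvPolynomial.X 0) ^ 3
          + (MvPolynomial.X 1) ^ 3
          - 3 * ((MvPolynomial.X 0) ^ 2 * (MvPolynomial.X 1) ^ 2))
          * ((MvPolynomial.X 0) * (MvPolynomial.X 1) ^ 4 + (MvPolynomial.X 0) * (MvPolynomial.X 1)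
          + (MvPolynomial.X 0) ^ 4 * (MvPolynomial.X 1)
          - 3 * ((MvPolynomial.X 0) ^ 2 * (MvPolynomial.X 1) ^ 2))
        + ((MvPolynomial.X 0) * (MvPolynomial.X 1) ^ 4 + (MvPolynomial.X 0) * (MvPolynomial.X 1)
          + (MvPolynomial.X 0) ^ 4 * (MvPolynomial.X 1)
          - 3 * ((MvPolynomial.X 0) ^ 2 * (MvPolynomial.X 1) ^ 2)) ^ 2
        - (MvPolynomial.X 0)
          * ((MvPolynomial.X 0) * (MvPolynomial.X 1) ^ 4 + (MvPolynomial.X 0) * (MvPolynomial.X 1)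
          + (MvPolynomial.X 0) ^ 4 * (MvPolynomial.X 1)
          - 3 * ((MvPolynomial.X 0) ^ 2 * (MvPolynomial.X 1) ^ 2))
          * ((MvPolynomial.X 0) ^ 4 * (MvPolynomial.X 1) ^ 2 + (MvPolynomial.X 1) ^ 4
          + (MvPolynomial.X 0) ^ 2 - (MvPolynomial.X 0) ^ 2 * (MvPolynomial.X 1) ^ 3
          - (MvPolynomial.X 0) * (MvPolynomial.X 1) ^ 2
          - (MvPolynomial.X 0) ^ 3 * (MvPolynomial.X 1)))
        = N1 ^ 2 - N1 * N2 + N2 ^ 2 - v₁ * N2 * D := by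
      rw [hN1def, hN2def, hDdef, h1, h2]
      simp only [map_add, map_sub, map_mul, map_pow, map_ofNat]
    rw [← eG]
    refine Masuda.elem_ne_zero _ (fun _ => Polynomial.X) 12 ?_ (by norm_num)
    simp only [map_add, map_sub, map_mul, map_pow, map_ofNat, MvPolynomial.aeval_X]
    ring_nf
    compute_degree!
  clear_value N1 N2 D
  -- part 1 : invariance
  have hcD : c D ≠ 0 := fun h => hD (by simpa using c.injective (h.trans (map_zero c).symm))
  have hw : v₂ * v₂⁻¹ = 1 := mul_inv_cancel₀ hv2
  have ecN1 : c N1 = N1 * v₂⁻¹ ^ 6 := by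
    rw [hN1def]
    simp only [map_add, map_sub, map_mul, map_pow, map_ofNat, hc1, hc2, one_div,
      div_eq_mul_inv]
    linear_combination (-v₂⁻¹^3 - v₂*v₂⁻¹^4 - v₂^2*v₂⁻¹^5 + 3*v₁^2*v₂⁻¹^4 + 3*v₁^2*v₂*v₂⁻¹^5
      - v₁^3*v₂⁻¹^3 - v₁^3*v₂*v₂⁻¹^4 - v₁^3*v₂^2*v₂⁻¹^5) * hw
  have ecN2 : c N2 = N2 * v₂⁻¹ ^ 6 := by
    rw [hN2def]
    simp only [map_add, map_sub, map_mul, map_pow, map_ofNat, hc1, hc2, one_div,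
      div_eq_mul_inv]
    linear_combination (-v₁*v₂⁻¹^2 - v₁*v₂⁻¹^5 - v₁*v₂*v₂⁻¹^3 - v₁*v₂^2*v₂⁻¹^4 - v₁*v₂^3*v₂⁻¹^5
      + 3*v₁^2*v₂⁻¹^4 + 3*v₁^2*v₂*v₂⁻¹^5 - v₁^4*v₂⁻¹^5) * hw
  have ecD : c D = D * v₂⁻¹ ^ 6 := by
    rw [hDdef]
    simp only [map_add, map_sub, map_mul, map_pow, map_ofNat, hc1, hc2, one_div,
      div_eq_mul_inv]
    linear_combination (-v₂⁻¹^2 - v₂*v₂⁻¹^3 - v₂^2*v₂⁻¹^4 - v₂^3*v₂⁻¹^5 + v₁*v₂⁻¹^4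
      + v₁*v₂*v₂⁻¹^5 + v₁^2*v₂⁻¹^3 + v₁^2*v₂*v₂⁻¹^4 + v₁^2*v₂^2*v₂⁻¹^5 + v₁^3*v₂⁻¹^5
      - v₁^4*v₂⁻¹^4 - v₁^4*v₂*v₂⁻¹^5) * hw
  have goal1 : c (N1 / D) = N1 / D := by
    rw [map_div₀, ecN1, ecD, mul_div_mul_right _ _ (pow_ne_zero 6 (inv_ne_zero hv2))]
  have goal2 : c (N2 / D) = N2 / D := by
    rw [map_div₀, ecN2, ecD, mul_div_mul_right _ _ (pow_ne_zero 6 (inv_ne_zero hv2))]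
  refine ⟨goal1, goal2, ?_⟩
  -- part 2 : the fixed field
  set Y1 := N1 / D with hY1def
  set Y2 := N2 / D with hY2def
  have hY1ne : Y1 ≠ 0 := div_ne_zero hN1 hD
  have hY2ne : Y2 ≠ 0 := div_ne_zero hN2 hD
  have hY1D : Y1 * D = N1 := div_mul_cancel₀ N1 hD
  have hY2D : Y2 * D = N2 := div_mul_cancel₀ N2 hD
  clear_value Y1 Y2
  set E := IntermediateField.adjoin k {Y1, Y2} with hEdef
  have hY1mem : Y1 ∈ E := IntermediateField.subset_adjoin k _ (Set.mem_insert _ _)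
  have hY2mem : Y2 ∈ E := IntermediateField.subset_adjoin k _
    (Set.mem_insert_of_mem _ rfl)
  -- the coefficients of the cubic
  set p' : ↥E := ⟨(Y1 ^ 3 + Y2 ^ 3 + 1) / (Y1 * Y2),
    div_mem (add_mem (add_mem (pow_mem hY1mem 3) (pow_mem hY2mem 3)) (one_mem E))
      (mul_mem hY1mem hY2mem)⟩ with hp'def
  set q' : ↥E := ⟨((Y1 ^ 2 - Y1 * Y2 + Y2 ^ 2) ^ 2 + Y1 + Y2) / (Y1 * Y2),
    div_mem (add_mem (add_mem (pow_mem (add_mem (sub_mem (pow_mem hY1mem 2)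
      (mul_mem hY1mem hY2mem)) (pow_mem hY2mem 2)) 2) hY1mem) hY2mem)
      (mul_mem hY1mem hY2mem)⟩ with hq'def
  have hPmul : (p' : FractionRing (MvPolynomial (Fin 2) k)) * (Y1 * Y2) = Y1 ^ 3 + Y2 ^ 3 + 1 :=
    div_mul_cancel₀ _ (mul_ne_zero hY1ne hY2ne)
  have hQmul : (q' : FractionRing (MvPolynomial (Fin 2) k)) * (Y1 * Y2) =
      (Y1 ^ 2 - Y1 * Y2 + Y2 ^ 2) ^ 2 + Y1 + Y2 :=
    div_mul_cancel₀ _ (mul_ne_zero hY1ne hY2ne)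
  clear_value p' q'
  have hkey : v₁ ^ 3 * (N1 * (N2 * D ^ 2)) - v₁ ^ 2 * (D * (N1 ^ 3 + N2 ^ 3 + D ^ 3))
      + v₁ * ((N1 ^ 2 - N1 * N2 + N2 ^ 2) ^ 2 + (N1 + N2) * D ^ 3) - N1 * (N2 * D ^ 2) = 0 := by
    rw [hN1def, hN2def, hDdef]; ring
  have hcubicK : v₁ ^ 3 - (p' : FractionRing (MvPolynomial (Fin 2) k)) * v₁ ^ 2
      + (q' : FractionRing (MvPolynomial (Fin 2) k)) * v₁ - 1 = 0 := by
    have hmul : (v₁ ^ 3 - (p' : FractionRing (MvPolynomial (Fin 2) k)) * v₁ ^ 2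
        + (q' : FractionRing (MvPolynomial (Fin 2) k)) * v₁ - 1) * (Y1 * (Y2 * D ^ 4)) = 0 := by
      linear_combination (-(v₁^2*D^4)) * hPmul + (v₁*D^4) * hQmul
        + (-(Y2*D^3) + v₁*N1^3 + v₁*D^3 - 2*v₁*Y2*D*N1^2 + 3*v₁*Y2^2*D^2*N1 - 2*v₁*Y2^3*D^3
          + v₁*Y1*D*N1^2 - 2*v₁*Y1*Y2*D^2*N1 + 3*v₁*Y1*Y2^2*D^3 + v₁*Y1^2*D^2*N1
          - 2*v₁*Y1^2*Y2*D^3 + v₁*Y1^3*D^3 - v₁^2*D*N1^2 - v₁^2*Y1*D^2*N1 - v₁^2*Y1^2*D^3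
          + v₁^3*Y2*D^3) * hY1D
        + (-(D^2*N1) + v₁*N2^3 - 2*v₁*N1*N2^2 + 3*v₁*N1^2*N2 - 2*v₁*N1^3 + v₁*D^3
          + v₁*Y2*D*N2^2 - 2*v₁*Y2*D*N1*N2 + 3*v₁*Y2*D*N1^2 + v₁*Y2^2*D^2*N2
          - 2*v₁*Y2^2*D^2*N1 + v₁*Y2^3*D^3 - v₁^2*D*N2^2 - v₁^2*Y2*D^2*N2 - v₁^2*Y2^2*D^3
          + v₁^3*D^2*N1) * hY2D
        + hkey
    rcases mul_eq_zero.mp hmul with h | h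
    · exact h
    · exact absurd h (mul_ne_zero hY1ne (mul_ne_zero hY2ne (pow_ne_zero 4 hD)))
  -- the cubic polynomial over E
  set P : Polynomial ↥E := Polynomial.X ^ 3 - Polynomial.C p' * Polynomial.X ^ 2
    + Polynomial.C q' * Polynomial.X - 1 with hPdef
  have hmonic : P.Monic := by
    rw [hPdef]; monicity!
    all_goals exact one_ne_zero
  have hPdeg : P.natDegree = 3 := by
    rw [hPdef]; compute_degree!
    all_goals exact one_ne_zero
  have haeval : Polynomial.aeval v₁ P = 0 := by
    rw [hPdef]
    simp only [map_sub, map_add, map_mul, map_pow, Polynomial.aeval_X, Polynomial.aeval_C,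
      map_one, IntermediateField.algebraMap_apply]
    linear_combination hcubicK
  have hint : IsIntegral ↥E v₁ := ⟨P, hmonic, haeval⟩
  have hminpol : (minpoly ↥E v₁).natDegree ≤ 3 := by
    rw [← hPdeg]
    exact Polynomial.natDegree_le_natDegree (minpoly.min ↥E v₁ hmonic haeval)
  -- v₂ is in E(v₁)
  have hconv : (Y1 ^ 2 - Y1 * Y2 + Y2 ^ 2 - Y2 * v₁) * D ^ 2
      = N1 ^ 2 - N1 * N2 + N2 ^ 2 - v₁ * N2 * D := by
    linear_combination (N1 - Y2*D + Y1*D) * hY1D + (N2 - N1 + Y2*D - v₁*D) * hY2D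
  have hden : Y1 ^ 2 - Y1 * Y2 + Y2 ^ 2 - Y2 * v₁ ≠ 0 := by
    intro h; apply hG; rw [← hconv, h, zero_mul]
  have hkey2 : v₂ * (N1 ^ 2 - N1 * N2 + N2 ^ 2 - v₁ * N2 * D) = N1 * D - v₁ * D ^ 2 := by
    rw [hN1def, hN2def, hDdef]; ring
  have hv2eq : v₂ = (Y1 - v₁) / (Y1 ^ 2 - Y1 * Y2 + Y2 ^ 2 - Y2 * v₁) := by
    rw [eq_div_iff hden]
    apply mul_right_cancel₀ (pow_ne_zero 2 hD)
    linear_combination (-D + v₂*N1 - v₂*Y2*D + v₂*Y1*D) * hY1D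
      + (v₂*N2 - v₂*N1 + v₂*Y2*D - v₁*v₂*D) * hY2D + hkey2
  have hY1' : Y1 ∈ IntermediateField.adjoin ↥E {v₁} :=
    IntermediateField.algebraMap_mem _ (⟨Y1, hY1mem⟩ : ↥E)
  have hY2' : Y2 ∈ IntermediateField.adjoin ↥E {v₁} :=
    IntermediateField.algebraMap_mem _ (⟨Y2, hY2mem⟩ : ↥E)
  have hv1' : v₁ ∈ IntermediateField.adjoin ↥E {v₁} :=
    IntermediateField.mem_adjoin_simple_self ↥E v₁
  have hv2mem : v₂ ∈ IntermediateField.adjoin ↥E {v₁} := by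
    rw [hv2eq]
    exact div_mem (sub_mem hY1' hv1')
      (sub_mem (add_mem (sub_mem (pow_mem hY1' 2) (mul_mem hY1' hY2')) (pow_mem hY2' 2))
        (mul_mem hY2' hv1'))
  -- E(v₁) is everything
  have hgen : ∀ p : MvPolynomial (Fin 2) k,
      algebraMap (MvPolynomial (Fin 2) k) (FractionRing (MvPolynomial (Fin 2) k)) p
        ∈ IntermediateField.adjoin ↥E {v₁} := by
    intro p
    induction p using MvPolynomial.induction_on with
    | C a =>
      have e : (algebraMap (MvPolynomial (Fin 2) k) (FractionRing (MvPolynomial (Fin 2) k)))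
          (MvPolynomial.C a)
          = algebraMap k (FractionRing (MvPolynomial (Fin 2) k)) a := by
        rw [IsScalarTower.algebraMap_apply k (MvPolynomial (Fin 2) k)
          (FractionRing (MvPolynomial (Fin 2) k)), MvPolynomial.algebraMap_eq]
      rw [e, IsScalarTower.algebraMap_apply k ↥E (FractionRing (MvPolynomial (Fin 2) k))]
      exact IntermediateField.algebraMap_mem _ _
    | add p q hp hq => rw [map_add]; exact add_mem hp hq
    | mul_X p i hp =>
      rw [map_mul]
      refine mul_mem hp ?_
      fin_cases i
      · exact h1 ▸ hv1'
      · exact h2 ▸ hv2mem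
  have htop : IntermediateField.adjoin ↥E {v₁}
      = (⊤ : IntermediateField ↥E (FractionRing (MvPolynomial (Fin 2) k))) := by
    refine eq_top_iff.mpr fun x _ => ?_
    obtain ⟨p, q, -, rfl⟩ := IsFractionRing.div_surjective (A := MvPolynomial (Fin 2) k) x
    exact div_mem (hgen p) (hgen q)
  -- finite dimensionality and rank bound
  haveI hfd0 : FiniteDimensional ↥E ↥(IntermediateField.adjoin ↥E {v₁}) :=
    IntermediateField.adjoin.finiteDimensional hint
  haveI hfd : FiniteDimensional ↥E (FractionRing (MvPolynomial (Fin 2) k)) := by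
    haveI : FiniteDimensional ↥E
        ↥(⊤ : IntermediateField ↥E (FractionRing (MvPolynomial (Fin 2) k))) := htop ▸ hfd0
    exact Module.Finite.equiv (IntermediateField.topEquiv).toLinearEquiv
  have hfrE : Module.finrank ↥E (FractionRing (MvPolynomial (Fin 2) k)) ≤ 3 := by
    have e1 := IntermediateField.adjoin.finrank hint
    have e2 : Module.finrank ↥E (FractionRing (MvPolynomial (Fin 2) k))
        = Module.finrank ↥E ↥(IntermediateField.adjoin ↥E {v₁}) := by
      rw [htop]
      exact ((IntermediateField.topEquiv).toLinearEquiv.finrank_eq).symm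
    rw [e2, e1]; exact hminpol
  -- the fixed field has degree 3
  have h3 : Nat.card ↥(Subgroup.zpowers c) = 3 := by rw [Nat.card_zpowers, hord]
  haveI : Finite ↥(Subgroup.zpowers c) := Nat.finite_of_card_ne_zero (by omega)
  haveI : Fintype ↥(Subgroup.zpowers c) := Fintype.ofFinite _
  have hcard : Fintype.card ↥(Subgroup.zpowers c) = 3 := by
    rw [← Nat.card_eq_fintype_card, h3]
  have hfrF : Module.finrank ↥(IntermediateField.fixedField (Subgroup.zpowers c))
      (FractionRing (MvPolynomial (Fin 2) k)) = 3 := by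
    rw [Masuda.finrank_fixedField, hcard]
  -- E is contained in the fixed field
  have hEleF : E ≤ IntermediateField.fixedField (Subgroup.zpowers c) := by
    rw [hEdef, IntermediateField.adjoin_le_iff]
    rintro x (rfl | rfl)
    · exact Masuda.mem_fixedField_of_fixed c goal1
    · exact Masuda.mem_fixedField_of_fixed c goal2
  -- conclude
  exact (IntermediateField.eq_of_le_of_finrank_le' hEleF (by rw [hfrF]; exact hfrE)).symm
end

section
/- Let $k$ be a field of characteristic $\neq 2$, and let $F = k(w_1, w_2, w_3, w_4)$ where $w_2, w_3, w_4$ are algebraically independent over $k$ and $w_3^2 + w_4^2 = 2(-1 + 2w_1 + 3w_2^2)(w_1 + 2w_2^2)$. Then $F$ is purely transcendental over $k$: setting $t_3 = w_3/(w_1 + 2w_2^2)$ and $t_4 = w_4/(w_1 + 2w_2^2)$ one has $F = k(w_2, t_3, t_4)$. -/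
/-- Final step of Case 3: if `w₂, w₃, w₄` are algebraically independent over `k`
(`char k ≠ 2`) and `w₃² + w₄² = 2(-1 + 2w₁ + 3w₂²)(w₁ + 2w₂²)` with `w₁ + 2w₂² ≠ 0`, then
with `t₃ = w₃/(w₁+2w₂²)`, `t₄ = w₄/(w₁+2w₂²)` we have
`k(w₁,w₂,w₃,w₄) = k(w₂,t₃,t₄)`, purely transcendental over `k`. -/
theorem stmt_14 {k K : Type*} [Field k] [Field K] [Algebra k K] (hchar : ringChar k ≠ 2)
    (w₁ w₂ w₃ w₄ : K)
    (hindep : AlgebraicIndependent k ![w₂, w₃, w₄])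
    (hne : w₁ + 2 * w₂ ^ 2 ≠ 0)
    (hrel : w₃ ^ 2 + w₄ ^ 2 = 2 * (-1 + 2 * w₁ + 3 * w₂ ^ 2) * (w₁ + 2 * w₂ ^ 2)) :
    IntermediateField.adjoin k {w₁, w₂, w₃, w₄} =
      IntermediateField.adjoin k
        {w₂, w₃ / (w₁ + 2 * w₂ ^ 2), w₄ / (w₁ + 2 * w₂ ^ 2)} := by
  set d := w₁ + 2 * w₂ ^ 2 with hd
  set t₃ := w₃ / d with ht₃
  set t₄ := w₄ / d with ht₄
  have h2k : (2 : k) ≠ 0 := Ring.two_ne_zero hchar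
  have h2 : (2 : K) ≠ 0 := by
    have := (algebraMap k K).injective
    intro h
    apply h2k
    apply this
    rw [map_ofNat, map_zero, h]
  have hsd : (t₃ ^ 2 + t₄ ^ 2) * d = 2 * (-1 + 2 * w₁ + 3 * w₂ ^ 2) := by
    rw [ht₃, ht₄]
    field_simp
    linear_combination hrel
  have htr : Transcendental k w₂ := by
    have := hindep.transcendental (i := 0)
    simpa using this
  have hs4 : t₃ ^ 2 + t₄ ^ 2 - 4 ≠ 0 := by
    intro h
    rw [sub_eq_zero] at h
    rw [h] at hsd
    have hw2 : w₂ ^ 2 = -1 := by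
      have h' : 2 * w₂ ^ 2 = 2 * (-1) := by linear_combination hsd
      exact mul_left_cancel₀ h2 h'
    apply htr
    refine ⟨Polynomial.X ^ 2 + Polynomial.C 1, Polynomial.X_pow_add_C_ne_zero (by norm_num) 1, ?_⟩
    simp [hw2]
  have hw₁ : w₁ = (-2 + (6 - 2 * (t₃ ^ 2 + t₄ ^ 2)) * w₂ ^ 2) / (t₃ ^ 2 + t₄ ^ 2 - 4) := by
    rw [eq_div_iff hs4]
    linear_combination hsd
  set L := IntermediateField.adjoin k {w₂, t₃, t₄} with hL
  have hw₂L : w₂ ∈ L := IntermediateField.subset_adjoin k _ (by simp)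
  have ht₃L : t₃ ∈ L := IntermediateField.subset_adjoin k _ (by simp)
  have ht₄L : t₄ ∈ L := IntermediateField.subset_adjoin k _ (by simp)
  have h2L : (2 : K) ∈ L := by
    have : (2 : K) = 1 + 1 := by norm_num
    rw [this]; exact add_mem (one_mem _) (one_mem _)
  have h4L : (4 : K) ∈ L := by
    have : (4 : K) = 2 + 2 := by norm_num
    rw [this]; exact add_mem h2L h2L
  have h6L : (6 : K) ∈ L := by
    have : (6 : K) = 4 + 2 := by norm_num
    rw [this]; exact add_mem h4L h2L
  have hsL : t₃ ^ 2 + t₄ ^ 2 ∈ L := add_mem (pow_mem ht₃L 2) (pow_mem ht₄L 2)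
  have hw₁L : w₁ ∈ L := by
    rw [hw₁]
    exact div_mem (add_mem (neg_mem h2L) (mul_mem (sub_mem h6L (mul_mem h2L hsL))
      (pow_mem hw₂L 2))) (sub_mem hsL h4L)
  have hdL : d ∈ L := add_mem hw₁L (mul_mem h2L (pow_mem hw₂L 2))
  have hw₃ : w₃ = t₃ * d := by rw [ht₃]; field_simp
  have hw₄ : w₄ = t₄ * d := by rw [ht₄]; field_simp
  have hw₃L : w₃ ∈ L := hw₃ ▸ mul_mem ht₃L hdL
  have hw₄L : w₄ ∈ L := hw₄ ▸ mul_mem ht₄L hdL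
  apply le_antisymm
  · rw [IntermediateField.adjoin_le_iff]
    intro x hx
    simp only [Set.mem_insert_iff, Set.mem_singleton_iff] at hx
    rcases hx with rfl | rfl | rfl | rfl
    exacts [hw₁L, hw₂L, hw₃L, hw₄L]
  · rw [IntermediateField.adjoin_le_iff]
    intro x hx
    simp only [Set.mem_insert_iff, Set.mem_singleton_iff] at hx
    have hM₁ : w₁ ∈ IntermediateField.adjoin k {w₁, w₂, w₃, w₄} :=
      IntermediateField.subset_adjoin k _ (by simp)
    have hM₂ : w₂ ∈ IntermediateField.adjoin k {w₁, w₂, w₃, w₄} :=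
      IntermediateField.subset_adjoin k _ (by simp)
    have hM₃ : w₃ ∈ IntermediateField.adjoin k {w₁, w₂, w₃, w₄} :=
      IntermediateField.subset_adjoin k _ (by simp)
    have hM₄ : w₄ ∈ IntermediateField.adjoin k {w₁, w₂, w₃, w₄} :=
      IntermediateField.subset_adjoin k _ (by simp)
    have h2M : (2 : K) ∈ IntermediateField.adjoin k {w₁, w₂, w₃, w₄} := by
      have : (2 : K) = 1 + 1 := by norm_num
      rw [this]; exact add_mem (one_mem _) (one_mem _)
    have hdM : d ∈ IntermediateField.adjoin k {w₁, w₂, w₃, w₄} :=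
      add_mem hM₁ (mul_mem h2M (pow_mem hM₂ 2))
    rcases hx with rfl | rfl | rfl
    exacts [hM₂, div_mem hM₃ hdM, div_mem hM₄ hdM]
end
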